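/- arXiv:2103.01879 — 4 statements merged into one kernel-verified Lean document; each statement's English description precedes it below -/
import Mathlib

section
/- Let (a_n)_{n≥0} be a sequence of complex numbers and r > 0 be such that the power series ∑_{n=0}^∞ a_n z^n converges for every complex z with |z| < r. Then there exists ρ > 0 such that for every complex z with |z| < ρ, all series below converge and ∑_{n=0}^∞ a_n H_n z^n + log(1+z) · ∑_{n=0}^∞ a_n z^n = (1/(1+z)) · ∑_{n=0}^∞ (z/(1+z))^n · H_n · ( ∑_{k=0}^n binom(n,k) a_k ). -/
open Complex Finset

lemma sum_inv_eq_harmonic (n : ℕ) :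
    ∑ i ∈ Finset.range (n+1), (1:ℂ)/(i:ℂ) = ((harmonic n : ℚ) : ℂ) := by
  induction n with
  | zero => simp [harmonic]
  | succ n ih =>
      rw [Finset.sum_range_succ, ih, harmonic_succ]
      push_cast
      rw [one_div]

lemma comb (n : ℕ) : ∀ k : ℕ,
    ∑ i ∈ Finset.range (n+1), (((n-i).choose k : ℂ))/(i:ℂ)
      = (n.choose k : ℂ) * (((harmonic n : ℚ) : ℂ) - ((harmonic k : ℚ) : ℂ)) := by
  induction n with
  | zero =>
      intro k
      match k with
      | 0 => simp
      | k+1 => simp [Nat.choose_eq_zero_of_lt (Nat.succ_pos k)]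
  | succ n ih =>
      intro k
      match k with
      | 0 =>
          simp only [Nat.choose_zero_right, Nat.cast_one]
          rw [sum_inv_eq_harmonic (n+1)]
          simp [harmonic]
      | k+1 =>
          rw [Finset.sum_range_succ]
          have h1 : ((((n+1)-(n+1)).choose (k+1) : ℂ)) / (((n:ℕ)+1 : ℕ):ℂ) = 0 := by
            simp [Nat.choose_eq_zero_of_lt (Nat.succ_pos k)]
          rw [Nat.sub_self] at h1 ⊢
          rw [h1, add_zero]
          have h2 : ∀ i ∈ Finset.range (n+1),
              (((n+1-i).choose (k+1) : ℂ))/(i:ℂ)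
                = (((n-i).choose k : ℂ))/(i:ℂ) + (((n-i).choose (k+1) : ℂ))/(i:ℂ) := by
            intro i hi
            rw [Finset.mem_range] at hi
            have hni : n + 1 - i = (n - i) + 1 := by omega
            rw [hni, Nat.choose_succ_succ]
            push_cast
            ring
          rw [Finset.sum_congr rfl h2, Finset.sum_add_distrib, ih k, ih (k+1)]
          set A := (n.choose k : ℂ) with hA
          set B := (n.choose (k+1) : ℂ) with hB
          set C := ((n+1).choose (k+1) : ℂ) with hC
          have hp : C = A + B := by
            rw [hA, hB, hC, Nat.choose_succ_succ]; push_cast; ring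
          have hkey : A * ((n:ℂ)+1) = C * ((k:ℂ)+1) := by
            have h' : ((n+1) * n.choose k : ℕ) = ((n+1).choose (k+1) * (k+1) : ℕ) := by
              simpa [Nat.succ_eq_add_one] using Nat.add_one_mul_choose_eq n k
            have hc := congrArg (Nat.cast : ℕ → ℂ) h'
            push_cast at hc
            linear_combination hc
          have hn0 : ((n:ℂ)+1) ≠ 0 := by
            exact Nat.cast_add_one_ne_zero n
          have hk0 : ((k:ℂ)+1) ≠ 0 := by
            exact Nat.cast_add_one_ne_zero k
          have hHn : ((harmonic (n+1) : ℚ) : ℂ) = ((harmonic n : ℚ) : ℂ) + 1/((n:ℂ)+1) := by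
            rw [harmonic_succ]; push_cast; ring
          have hHk : ((harmonic (k+1) : ℚ) : ℂ) = ((harmonic k : ℚ) : ℂ) + 1/((k:ℂ)+1) := by
            rw [harmonic_succ]; push_cast; ring
          rw [hHn, hHk]
          set x := ((harmonic n : ℚ) : ℂ)
          set y := ((harmonic k : ℚ) : ℂ)
          have hdiv : A / ((k:ℂ)+1) = C / ((n:ℂ)+1) := by
            rw [div_eq_div_iff hk0 hn0]
            linear_combination hkey
          push_cast
          calc A * (x - y) + B * (x - (y + 1/((k:ℂ)+1)))
              = C * (x - y) - B/((k:ℂ)+1) := by rw [hp]; ring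
            _ = C * (x - y) + (A/((k:ℂ)+1) - C/((k:ℂ)+1)) := by
                rw [div_sub_div_same]
                have : A - C = -B := by linear_combination -hp
                rw [this]; ring
            _ = C * (x - y) + (C/((n:ℂ)+1) - C/((k:ℂ)+1)) := by rw [hdiv]
            _ = C * (x + 1/((n:ℂ)+1) - (y + 1/((k:ℂ)+1))) := by ring

set_option maxHeartbeats 1000000

lemma hasSum_choose_geom (k : ℕ) {w : ℂ} (hw : ‖w‖ < 1) :
    HasSum (fun n : ℕ => (n.choose k : ℂ) * w ^ n) (w^k / (1-w)^(k+1)) := by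
  have h := (hasSum_choose_mul_geometric_of_norm_lt_one k hw).mul_left (w^k)
  have h2 : HasSum (fun n : ℕ => (((n+k).choose k : ℂ)) * w^(n+k)) (w^k/(1-w)^(k+1)) := by
    rw [div_eq_mul_one_div]
    convert h using 1
    · rfl
    funext n
    rw [pow_add]; ring
  have h3 := (hasSum_nat_add_iff (f := fun n : ℕ => (n.choose k : ℂ) * w ^ n) k).mp h2
  have h4 : ∑ i ∈ Finset.range k, (i.choose k : ℂ) * w ^ i = 0 := by
    apply Finset.sum_eq_zero
    intro i hi
    rw [Finset.mem_range] at hi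
    simp [Nat.choose_eq_zero_of_lt hi]
  rwa [h4, add_zero] at h3

lemma summable_norm_choose_geom (k : ℕ) {w : ℂ} (hw : ‖w‖ < 1) :
    Summable (fun n : ℕ => ‖(n.choose k : ℂ) * w ^ n‖) := by
  have hw' : ‖(‖w‖ : ℝ)‖ < 1 := by
    rwa [Real.norm_eq_abs, _root_.abs_of_nonneg (norm_nonneg w)]
  apply Summable.of_nonneg_of_le (fun n => norm_nonneg _) _
    (summable_choose_mul_geometric_of_norm_lt_one (R := ℝ) k hw')
  intro n
  rw [norm_mul, norm_pow]
  simp only [Complex.norm_natCast]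
  gcongr
  exact_mod_cast Nat.le_add_right n k

lemma summable_norm_logterm {w : ℂ} (hw : ‖w‖ < 1) :
    Summable (fun n : ℕ => ‖w ^ n / (n:ℂ)‖) := by
  apply Summable.of_nonneg_of_le (fun n => norm_nonneg _) _
    (summable_geometric_of_lt_one (norm_nonneg w) hw)
  intro n
  rw [norm_div, norm_pow, Complex.norm_natCast]
  match n with
  | 0 => simp
  | n+1 =>
      apply div_le_self (pow_nonneg (norm_nonneg w) _)
      exact_mod_cast Nat.one_le_iff_ne_zero.mpr (Nat.succ_ne_zero n)

lemma hasSum_choose_harmonic (k : ℕ) {w : ℂ} (hw : ‖w‖ < 1) :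
    HasSum (fun n : ℕ => (n.choose k : ℂ) * ((harmonic n : ℚ) : ℂ) * w ^ n)
      (w^k / (1-w)^(k+1) * (((harmonic k : ℚ) : ℂ) - Complex.log (1-w))) := by
  have hf := summable_norm_logterm hw
  have hg := summable_norm_choose_geom k hw
  have hprod := hasSum_sum_range_mul_of_summable_norm (f := fun n : ℕ => w ^ n / (n:ℂ))
    (g := fun n : ℕ => (n.choose k : ℂ) * w ^ n) hf hg
  rw [(hasSum_taylorSeries_neg_log hw).tsum_eq, (hasSum_choose_geom k hw).tsum_eq] at hprod
  have hterm : ∀ n : ℕ, (∑ i ∈ Finset.range (n+1),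
      (w ^ i / (i:ℂ)) * ((((n-i).choose k : ℂ)) * w ^ (n-i)))
        = (n.choose k : ℂ) * (((harmonic n : ℚ) : ℂ) - ((harmonic k : ℚ) : ℂ)) * w ^ n := by
    intro n
    rw [← comb n k, Finset.sum_mul]
    apply Finset.sum_congr rfl
    intro i hi
    rw [Finset.mem_range] at hi
    have hpow : w ^ i * w ^ (n - i) = w ^ n := by
      rw [← pow_add]; congr 1; omega
    rw [← hpow]; ring
  have hprod' : HasSum (fun n : ℕ =>
      (n.choose k : ℂ) * (((harmonic n : ℚ) : ℂ) - ((harmonic k : ℚ) : ℂ)) * w ^ n)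
      (-Complex.log (1-w) * (w^k/(1-w)^(k+1))) := by
    convert hprod using 1
    · rfl
    funext n
    exact (hterm n).symm
  have h5 := (hasSum_choose_geom k hw).mul_left ((harmonic k : ℚ) : ℂ)
  have h6 := hprod'.add h5
  convert h6 using 1 with n
  · funext n; ring
  · ring

lemma harmonic_le_nat (n : ℕ) : (harmonic n : ℚ) ≤ n := by
  induction n with
  | zero => simp
  | succ n ih =>
      rw [harmonic_succ]
      push_cast
      have : ((n:ℚ)+1)⁻¹ ≤ 1 := by
        rw [inv_le_one_iff₀]; right; push_cast; linarith [Nat.cast_nonneg (α := ℚ) n]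
      linarith

lemma harmonic_nonneg (n : ℕ) : 0 ≤ harmonic n := by
  unfold harmonic
  positivity

theorem stmt4 (a : ℕ → ℂ) (r : ℝ) (hr : 0 < r)
    (hconv : ∀ z : ℂ, ‖z‖ < r → Summable (fun n : ℕ => a n * z ^ n)) :
    ∃ ρ : ℝ, 0 < ρ ∧ ∀ z : ℂ, ‖z‖ < ρ →
      ∃ A B C : ℂ,
        HasSum (fun n : ℕ => a n * (harmonic n : ℝ) * z ^ n) A ∧
        HasSum (fun n : ℕ => a n * z ^ n) B ∧
        HasSum (fun n : ℕ =>
          (z / (1 + z)) ^ n * (harmonic n : ℝ) *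
            (∑ k ∈ Finset.range (n + 1), (n.choose k : ℂ) * a k)) C ∧
        A + Complex.log (1 + z) * B = (1 / (1 + z)) * C := by
  set s : ℝ := min r 1 / 2 with hs_def
  have hs : 0 < s := by positivity
  have hs_lt_r : s < r := by
    rcases le_total r 1 with h | h
    · simp only [hs_def, min_eq_left h]; linarith
    · simp only [hs_def, min_eq_right h]; linarith
  have hs_le : s ≤ 1/2 := by
    have : min r 1 ≤ 1 := min_le_right r 1
    simp only [hs_def]; linarith
  -- coefficient bound
  obtain ⟨M, hM⟩ : ∃ M : ℝ, ∀ n : ℕ, ‖a n‖ * s ^ n ≤ M := by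
    have hsum := hconv (s : ℂ) (by rwa [Complex.norm_real, Real.norm_eq_abs, _root_.abs_of_pos hs])
    have htend := hsum.tendsto_atTop_zero.norm
    rw [norm_zero] at htend
    obtain ⟨M, hM⟩ := htend.bddAbove_range
    refine ⟨M, fun n => ?_⟩
    have : ‖a n * (s:ℂ)^n‖ ≤ M := hM ⟨n, rfl⟩
    rwa [norm_mul, norm_pow, Complex.norm_real, Real.norm_eq_abs, _root_.abs_of_pos hs] at this
  have hMnn : 0 ≤ M := le_trans (by positivity) (hM 0)
  have habs : ∀ n : ℕ, ‖a n‖ ≤ M / s ^ n := fun n => by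
    rw [le_div_iff₀ (by positivity)]; exact hM n
  refine ⟨s / (4*(s+1)), by positivity, fun z hz => ?_⟩
  have hρ4 : s / (4*(s+1)) ≤ 1/4 := by
    rw [div_le_div_iff₀ (by positivity) (by norm_num)]
    nlinarith
  have hz4 : ‖z‖ < 1/4 := lt_of_lt_of_le hz hρ4
  have h1z : (1:ℝ)/2 ≤ ‖1+z‖ := by
    have h := norm_add_le (1+z) (-z)
    simp only [add_neg_cancel_right, norm_neg, norm_one] at h
    linarith
  have hz1 : (1:ℂ)+z ≠ 0 := by
    intro h
    rw [h, norm_zero] at h1z; linarith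
  set w : ℂ := z / (1+z) with hw_def
  have hwnorm : ‖w‖ ≤ 2*‖z‖ := by
    rw [hw_def, norm_div, div_le_iff₀ (by linarith)]
    nlinarith [norm_nonneg z]
  have hw1 : ‖w‖ < 1 := by linarith
  set q : ℝ := ‖w‖ * (1+1/s) with hq_def
  have hq : q < 1/2 := by
    have hzq : ‖z‖ * (4*(s+1)) < s := (lt_div_iff₀ (by positivity)).mp hz
    have h2 : ‖w‖ * (4*(s+1)) < 2*s := by nlinarith [norm_nonneg z, norm_nonneg w]
    have he : q = ‖w‖*(s+1)/s := by rw [hq_def]; field_simp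
    rw [he, div_lt_iff₀ hs]
    nlinarith [norm_nonneg w]
  have hqnn : 0 ≤ q := by positivity
  -- summability of A series
  have htzs : ‖z‖/s < 1 := by
    rw [div_lt_one hs]
    have : s / (4*(s+1)) < s := by
      rw [div_lt_iff₀ (by positivity)]; nlinarith
    linarith
  have htnn : 0 ≤ ‖z‖/s := by positivity
  have hsummandA : ∀ n : ℕ, ‖a n * ((harmonic n : ℝ):ℂ) * z^n‖ ≤ M * ((n:ℝ) * (‖z‖/s)^n) := by
    intro n
    rw [norm_mul, norm_mul, norm_pow, Complex.norm_real, Real.norm_eq_abs,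
      _root_.abs_of_nonneg (by exact_mod_cast harmonic_nonneg n)]
    have h1 : (harmonic n : ℝ) ≤ n := by exact_mod_cast harmonic_le_nat n
    have h2 : ‖a n‖ ≤ M / s^n := habs n
    have h3 : (‖z‖/s)^n = ‖z‖^n / s^n := div_pow _ _ _
    rw [h3]
    have hzn : (0:ℝ) ≤ ‖z‖^n := by positivity
    have hhn : (0:ℝ) ≤ (harmonic n : ℝ) := by exact_mod_cast harmonic_nonneg n
    calc ‖a n‖ * (harmonic n : ℝ) * ‖z‖^n ≤ (M / s^n) * (n:ℝ) * ‖z‖^n := by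
          apply mul_le_mul_of_nonneg_right _ hzn
          exact mul_le_mul h2 h1 hhn (by positivity)
      _ = M * ((n:ℝ) * (‖z‖^n / s^n)) := by field_simp
  have hsumA : Summable (fun n : ℕ => a n * ((harmonic n : ℝ):ℂ) * z^n) := by
    apply Summable.of_norm
    apply Summable.of_nonneg_of_le (fun n => norm_nonneg _) hsummandA
    have := (summable_pow_mul_geometric_of_norm_lt_one (R := ℝ) 1
      (by rwa [Real.norm_eq_abs, _root_.abs_of_nonneg htnn])).mul_left M
    simpa using this
  have hB : Summable (fun n : ℕ => a n * z^n) := by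
    apply hconv
    calc ‖z‖ < s / (4*(s+1)) := hz
      _ ≤ s := by rw [div_le_iff₀ (by positivity)]; nlinarith
      _ < r := hs_lt_r
  -- the double series
  set F : ℕ × ℕ → ℂ := fun p => a p.2 * (p.1.choose p.2 : ℂ) * ((harmonic p.1 : ℚ):ℂ) * w ^ p.1
    with hF_def
  have hFvanish : ∀ n k : ℕ, k ∉ Finset.range (n+1) → F (n, k) = 0 := by
    intro n k hk
    rw [Finset.mem_range] at hk
    have : n < k := by omega
    simp [hF_def, Nat.choose_eq_zero_of_lt this]
  have hFnormval : ∀ n k : ℕ, ‖F (n, k)‖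
      = ‖a k‖ * (n.choose k : ℝ) * (harmonic n : ℝ) * ‖w‖ ^ n := by
    intro n k
    simp only [hF_def, norm_mul, norm_pow, Complex.norm_natCast]
    rw [show ‖((harmonic n : ℚ):ℂ)‖ = (harmonic n : ℝ) by
      rw [← Complex.ofReal_ratCast, Complex.norm_real, Real.norm_eq_abs,
        _root_.abs_of_nonneg (by exact_mod_cast harmonic_nonneg n)]]
  have hrowbound : ∀ n : ℕ, ∑ k ∈ Finset.range (n+1), ‖F (n, k)‖ ≤ M * ((n:ℝ) * q ^ n) := by
    intro n
    have hbinom : ∑ k ∈ Finset.range (n+1), (n.choose k : ℝ) * (1/s)^k = (1/s + 1)^n := by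
      rw [add_pow]
      apply Finset.sum_congr rfl
      intro k _
      rw [one_pow]
      ring
    have hhn : (0:ℝ) ≤ (harmonic n : ℝ) := by exact_mod_cast harmonic_nonneg n
    have hhn' : (harmonic n : ℝ) ≤ n := by exact_mod_cast harmonic_le_nat n
    calc ∑ k ∈ Finset.range (n+1), ‖F (n, k)‖
        ≤ ∑ k ∈ Finset.range (n+1), (M * (1/s)^k) * ((n.choose k : ℝ) * ((harmonic n : ℝ) * ‖w‖^n)) := by
          apply Finset.sum_le_sum
          intro k _
          rw [hFnormval n k]
          have h2 : ‖a k‖ ≤ M * (1/s)^k := by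
            rw [one_div, inv_pow, ← div_eq_mul_inv]
            exact habs k
          have : ‖a k‖ * (n.choose k : ℝ) * (harmonic n : ℝ) * ‖w‖ ^ n
              = ‖a k‖ * ((n.choose k : ℝ) * ((harmonic n : ℝ) * ‖w‖^n)) := by ring
          rw [this]
          apply mul_le_mul_of_nonneg_right h2
          positivity
      _ = (M * ((harmonic n : ℝ) * ‖w‖^n)) * ∑ k ∈ Finset.range (n+1), (n.choose k : ℝ) * (1/s)^k := by
          rw [Finset.mul_sum]
          apply Finset.sum_congr rfl
          intro k _
          ring
      _ = M * ((harmonic n : ℝ) * (‖w‖ * (1/s+1))^n) := by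
          rw [hbinom, mul_pow]
          ring
      _ ≤ M * ((n:ℝ) * q ^ n) := by
          have hqe : ‖w‖ * (1/s+1) = q := by rw [hq_def]; ring
          rw [hqe]
          have hqn : (0:ℝ) ≤ q^n := by positivity
          apply mul_le_mul_of_nonneg_left _ hMnn
          exact mul_le_mul_of_nonneg_right hhn' hqn
  have hcompare : Summable (fun n : ℕ => M * ((n:ℝ) * q ^ n)) := by
    have := (summable_pow_mul_geometric_of_norm_lt_one (R := ℝ) 1
      (by rw [Real.norm_eq_abs, _root_.abs_of_nonneg hqnn]; linarith)).mul_left M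
    simpa using this
  have hFnorm : Summable (fun p : ℕ × ℕ => ‖F p‖) := by
    rw [summable_prod_of_nonneg (fun p => norm_nonneg _)]
    constructor
    · intro n
      exact summable_of_ne_finset_zero (s := Finset.range (n+1))
        (fun k hk => by rw [hFvanish n k hk, norm_zero])
    · apply Summable.of_nonneg_of_le _ _ hcompare
      · intro n
        exact tsum_nonneg (fun k => norm_nonneg _)
      · intro n
        rw [tsum_eq_sum (s := Finset.range (n+1))
          (fun k hk => by rw [hFvanish n k hk, norm_zero])]
        exact hrowbound n
  have hF : Summable F := hFnorm.of_norm
  set T : ℂ := ∑' p, F p with hT_def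
  -- row sums (fixed n) : gives the C series
  have hCsum : HasSum (fun n : ℕ => ∑ k ∈ Finset.range (n+1), F (n, k)) T :=
    hF.hasSum.prod_fiberwise (fun n => hasSum_sum_of_ne_finset_zero (hFvanish n))
  have hC : HasSum (fun n : ℕ =>
      (z / (1 + z)) ^ n * ((harmonic n : ℝ):ℂ) *
        (∑ k ∈ Finset.range (n + 1), (n.choose k : ℂ) * a k)) T := by
    convert hCsum using 2 with n
    rw [Finset.mul_sum]
    apply Finset.sum_congr rfl
    intro k _
    simp only [hF_def, ← hw_def, Complex.ofReal_ratCast]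
    ring
  -- column sums (fixed k)
  have e1 : (1:ℂ) - w = (1+z)⁻¹ := by
    rw [hw_def]
    field_simp
    ring
  have e3 : ∀ k : ℕ, w^k/(1-w)^(k+1) = (1+z)*z^k := by
    intro k
    rw [e1, hw_def, div_pow, inv_pow, div_inv_eq_mul, pow_succ]
    field_simp
  have e2 : Complex.log (1-w) = - Complex.log (1+z) := by
    rw [e1]
    apply Complex.log_inv
    intro hpi
    rw [Complex.arg_eq_pi_iff] at hpi
    obtain ⟨hre, -⟩ := hpi
    have : |z.re| ≤ ‖z‖ := Complex.abs_re_le_norm z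
    simp only [Complex.add_re, Complex.one_re] at hre
    have := abs_le.mp this
    linarith [this.1]
  have hRowsum : ∀ k : ℕ, HasSum (fun n => F (n, k))
      (a k * ((1+z) * z^k * (((harmonic k:ℚ):ℂ) + Complex.log (1+z)))) := by
    intro k
    have h := (hasSum_choose_harmonic k hw1).mul_left (a k)
    have hfun : (fun n : ℕ => a k * ((n.choose k:ℂ) * ((harmonic n:ℚ):ℂ) * w^n))
        = fun n => F (n,k) := by
      funext n; simp only [hF_def]; ring
    have hval : a k * (w^k/(1-w)^(k+1) * (((harmonic k:ℚ):ℂ) - Complex.log (1-w)))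
        = a k * ((1+z) * z^k * (((harmonic k:ℚ):ℂ) + Complex.log (1+z))) := by
      rw [e3 k, e2]; ring
    rw [hfun, hval] at h
    exact h
  have hColsum : HasSum (fun k : ℕ =>
      a k * ((1+z) * z^k * (((harmonic k:ℚ):ℂ) + Complex.log (1+z)))) T := by
    have hswap : HasSum (fun p : ℕ × ℕ => F p.swap) T :=
      ((Equiv.prodComm ℕ ℕ).hasSum_iff).mpr hF.hasSum
    exact hswap.prod_fiberwise (fun k => hRowsum k)
  -- the A and B series
  set A : ℂ := ∑' n, a n * ((harmonic n : ℝ):ℂ) * z^n with hA_def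
  have hA : HasSum (fun n : ℕ => a n * ((harmonic n : ℝ):ℂ) * z^n) A := hsumA.hasSum
  set B : ℂ := ∑' n, a n * z^n with hB_def
  have hBsum : HasSum (fun n : ℕ => a n * z^n) B := hB.hasSum
  have hAB : HasSum (fun k : ℕ =>
      a k * ((1+z) * z^k * (((harmonic k:ℚ):ℂ) + Complex.log (1+z))))
      ((1+z) * A + ((1+z) * Complex.log (1+z)) * B) := by
    have := (hA.mul_left (1+z)).add (hBsum.mul_left ((1+z) * Complex.log (1+z)))
    convert this using 2 with k
    · rfl
    simp only [← Complex.ofReal_ratCast]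
    ring
  have hTeq : T = (1+z) * A + ((1+z) * Complex.log (1+z)) * B := hColsum.unique hAB
  refine ⟨A, B, T, hA, hBsum, hC, ?_⟩
  rw [hTeq]
  field_simp
end

section
/- For every real t with 0 ≤ t < 1, the series ∑_{n=1}^∞ H_n · t^n/(2n−1) converges and equals log(1−t) + ( −1 + log √2 + (1/4)·log(1−t) ) · √t · log((1−√t)/(1+√t)) + (√t/2) · ( Li₂((1+√t)/2) − Li₂((1−√t)/2) ). -/
open Real Filter Topology

lemma harmonic_cast_le (n : ℕ) : (harmonic n : ℝ) ≤ n := by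
  induction n with
  | zero => simp
  | succ n ih =>
    push_cast [harmonic_succ]
    push_cast at ih
    have h1 : ((n : ℝ) + 1)⁻¹ ≤ 1 := by
      rw [inv_le_one_iff₀]; right; linarith [Nat.cast_nonneg (α := ℝ) n]
    linarith

lemma summable_linear_geom {r : ℝ} (hr : |r| < 1) :
    Summable (fun n : ℕ => ((n : ℝ) + 1) * |r| ^ n) := by
  have h1 : Summable (fun n : ℕ => (n : ℝ) ^ 1 * |r| ^ n) :=
    summable_pow_mul_geometric_of_norm_lt_one 1 (by rwa [Real.norm_eq_abs, abs_abs])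
  have h2 : Summable (fun n : ℕ => |r| ^ n) :=
    summable_geometric_of_lt_one (abs_nonneg r) hr
  have := h1.add h2
  refine this.congr fun n => ?_
  ring

lemma summable_harmonic_geom {x : ℝ} (hx : |x| < 1) :
    Summable (fun n : ℕ => (harmonic (n + 1) : ℝ) * x ^ (n + 1)) := by
  have hu : Summable (fun n : ℕ => ((n : ℝ) + 1) * |x| ^ (n + 1)) := by
    have := (summable_linear_geom hx).mul_left |x|
    refine this.congr fun n => ?_; ring
  refine Summable.of_norm_bounded hu fun n => ?_
  have h0 : (0:ℝ) ≤ (harmonic (n+1) : ℝ) :=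
    Rat.cast_nonneg.mpr (harmonic_pos (Nat.succ_ne_zero n)).le
  rw [Real.norm_eq_abs, abs_mul, abs_of_nonneg h0, abs_pow]
  have := harmonic_cast_le (n + 1)
  push_cast at this
  exact mul_le_mul_of_nonneg_right (by linarith) (by positivity)

lemma hasSum_harmonic_geom {x : ℝ} (hx : |x| < 1) :
    HasSum (fun n : ℕ => (harmonic (n + 1) : ℝ) * x ^ (n + 1))
      (-Real.log (1 - x) / (1 - x)) := by
  have hx1 : (1 : ℝ) - x ≠ 0 := by
    have := abs_lt.1 hx; intro h; linarith [this.2, sub_eq_zero.1 h]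
  have hs := summable_harmonic_geom hx
  set S := ∑' n : ℕ, (harmonic (n + 1) : ℝ) * x ^ (n + 1) with hSdef
  have h1 : HasSum (fun n : ℕ => (harmonic (n + 1) : ℝ) * x ^ (n + 1)) S := hs.hasSum
  have h2 : HasSum (fun n : ℕ => (harmonic (n + 2) : ℝ) * x ^ (n + 2))
      (S - (harmonic 1 : ℝ) * x ^ 1) := by
    have := (hasSum_nat_add_iff' (f := fun n : ℕ => (harmonic (n + 1) : ℝ) * x ^ (n + 1)) 1).2 h1
    simpa using this
  have h3 : HasSum (fun n : ℕ => x * ((harmonic (n + 1) : ℝ) * x ^ (n + 1))) (x * S) :=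
    h1.mul_left x
  have h4 := h2.sub h3
  have e : (fun n : ℕ => (harmonic (n + 2) : ℝ) * x ^ (n + 2) -
      x * ((harmonic (n + 1) : ℝ) * x ^ (n + 1))) =
      fun n : ℕ => x ^ (n + 2) / ((n : ℝ) + 2) := by
    funext n
    have hh : (harmonic (n + 2) : ℝ) = (harmonic (n + 1) : ℝ) + ((n : ℝ) + 2)⁻¹ := by
      push_cast [harmonic_succ]; ring
    rw [hh]
    have h2 : ((n : ℝ) + 2) ≠ 0 := by positivity
    field_simp
    ring
  rw [e] at h4
  have h5 : HasSum (fun n : ℕ => x ^ (n + 1) / ((n : ℝ) + 1)) (-Real.log (1 - x)) :=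
    Real.hasSum_pow_div_log_of_abs_lt_one hx
  have h6 : HasSum (fun n : ℕ => x ^ (n + 2) / ((n : ℝ) + 2)) (-Real.log (1 - x) - x) := by
    have := (hasSum_nat_add_iff' (f := fun n : ℕ => x ^ (n + 1) / ((n : ℝ) + 1)) 1).2 h5
    simp only [Finset.range_one, Finset.sum_singleton] at this
    convert this using 1
    · rfl
    · funext n; simp only [Nat.cast_add, Nat.cast_one]; ring
    · norm_num
  have key : S - (harmonic 1 : ℝ) * x ^ 1 - x * S = -Real.log (1 - x) - x :=
    h4.unique h6
  have hS : S = -Real.log (1 - x) / (1 - x) := by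
    have h1x : (harmonic 1 : ℝ) = 1 := by norm_num [harmonic]
    rw [h1x] at key
    field_simp
    linarith [key]
  rw [← hS]
  exact h1

/-- The real dilogarithm `Li₂(x) = ∑_{n=1}^∞ xⁿ/n²`. -/
noncomputable def Li2 (x : ℝ) : ℝ := ∑' n : ℕ, x ^ (n + 1) / (n + 1) ^ 2

lemma hasDerivAt_Li2_aux {x : ℝ} (hx : |x| < 1) :
    HasDerivAt Li2 (∑' n : ℕ, x ^ n / ((n : ℝ) + 1)) x := by
  set r : ℝ := (1 + |x|) / 2 with hr
  have hr0 : 0 < r := by positivity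
  have hr1 : r < 1 := by rw [hr]; linarith
  have hxr : |x| < r := by rw [hr]; linarith
  have hmem : x ∈ Set.Ioo (-r) r := abs_lt.1 hxr
  have key := hasDerivAt_tsum_of_isPreconnected
    (u := fun n : ℕ => r ^ n) (t := Set.Ioo (-r) r)
    (g := fun (n : ℕ) (y : ℝ) => y ^ (n + 1) / ((n : ℝ) + 1) ^ 2)
    (g' := fun (n : ℕ) (y : ℝ) => y ^ n / ((n : ℝ) + 1))
    (summable_geometric_of_lt_one hr0.le hr1) isOpen_Ioo (convex_Ioo _ _).isPreconnected
    (fun n y _ => by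
      have h1 : ((n : ℝ) + 1) ≠ 0 := by positivity
      have h := (hasDerivAt_pow (n + 1) y).div_const (((n : ℝ) + 1) ^ 2)
      refine h.congr_deriv ?_
      rw [Nat.add_sub_cancel]
      push_cast
      rw [pow_two, mul_div_mul_left _ _ h1])
    (fun n y hy => by
      have hyr : |y| ≤ r := (abs_lt.2 ⟨hy.1, hy.2⟩).le
      have h1 : (1 : ℝ) ≤ (n : ℝ) + 1 := by
        have := Nat.cast_nonneg (α := ℝ) n; linarith
      rw [Real.norm_eq_abs, abs_div, abs_pow]
      calc |y| ^ n / |(n : ℝ) + 1| ≤ |y| ^ n / 1 := by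
            gcongr; rw [abs_of_nonneg (by positivity)]; exact h1
        _ = |y| ^ n := div_one _
        _ ≤ r ^ n := pow_le_pow_left₀ (abs_nonneg y) hyr n)
    (Set.mem_Ioo.2 ⟨by linarith, hr0⟩)
    (by simpa using summable_zero.congr (fun n => by norm_num))
    hmem
  exact key

lemma tsum_geom_div : ∀ {x : ℝ}, 0 < x → x < 1 →
    (∑' n : ℕ, x ^ n / ((n : ℝ) + 1)) = -Real.log (1 - x) / x := by
  intro x h0 h1
  have hx : |x| < 1 := abs_lt.2 ⟨by linarith, h1⟩
  have h5 : HasSum (fun n : ℕ => x ^ (n + 1) / ((n : ℝ) + 1)) (-Real.log (1 - x)) :=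
    Real.hasSum_pow_div_log_of_abs_lt_one hx
  have h6 := h5.mul_left x⁻¹
  have e : (fun n : ℕ => x⁻¹ * (x ^ (n + 1) / ((n : ℝ) + 1))) =
      fun n : ℕ => x ^ n / ((n : ℝ) + 1) := by
    funext n
    rw [pow_succ']
    field_simp
  rw [e] at h6
  rw [h6.tsum_eq, inv_mul_eq_div]

lemma hasDerivAt_Li2 {x : ℝ} (h0 : 0 < x) (h1 : x < 1) :
    HasDerivAt Li2 (-Real.log (1 - x) / x) x := by
  have := hasDerivAt_Li2_aux (x := x) (abs_lt.2 ⟨by linarith, h1⟩)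
  rwa [tsum_geom_div h0 h1] at this

noncomputable def PsiAux (s : ℝ) : ℝ :=
  ∑' n : ℕ, (harmonic (n + 1) : ℝ) * s ^ (2 * n + 1) / (2 * (n : ℝ) + 1)

lemma hasDerivAt_PsiAux {x : ℝ} (hx : |x| < 1) :
    HasDerivAt PsiAux (∑' n : ℕ, (harmonic (n + 1) : ℝ) * x ^ (2 * n)) x := by
  set r : ℝ := (1 + |x|) / 2 with hr
  have hr0 : 0 < r := by positivity
  have hr1 : r < 1 := by rw [hr]; linarith
  have hxr : |x| < r := by rw [hr]; linarith
  have hmem : x ∈ Set.Ioo (-r) r := abs_lt.1 hxr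
  have hu : Summable (fun n : ℕ => ((n : ℝ) + 1) * |r ^ 2| ^ n) := by
    refine summable_linear_geom ?_
    rw [abs_of_nonneg (by positivity : (0:ℝ) ≤ r ^ 2)]
    nlinarith
  have key := hasDerivAt_tsum_of_isPreconnected
    (u := fun n : ℕ => ((n : ℝ) + 1) * |r ^ 2| ^ n) (t := Set.Ioo (-r) r)
    (g := fun (n : ℕ) (y : ℝ) => (harmonic (n + 1) : ℝ) * y ^ (2 * n + 1) / (2 * (n : ℝ) + 1))
    (g' := fun (n : ℕ) (y : ℝ) => (harmonic (n + 1) : ℝ) * y ^ (2 * n))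
    hu isOpen_Ioo (convex_Ioo _ _).isPreconnected
    (fun n y _ => by
      have h1 : (2 * (n : ℝ) + 1) ≠ 0 := by positivity
      have h := ((hasDerivAt_pow (2 * n + 1) y).const_mul
        ((harmonic (n + 1) : ℝ))).div_const (2 * (n : ℝ) + 1)
      refine h.congr_deriv ?_
      rw [Nat.add_sub_cancel]
      push_cast
      field_simp)
    (fun n y hy => by
      have hyr : |y| ≤ r := (abs_lt.2 ⟨hy.1, hy.2⟩).le
      have hH : (0:ℝ) ≤ (harmonic (n+1) : ℝ) :=
        Rat.cast_nonneg.mpr (harmonic_pos (Nat.succ_ne_zero n)).le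
      have hHle : (harmonic (n+1) : ℝ) ≤ (n : ℝ) + 1 := by
        have := harmonic_cast_le (n + 1); push_cast at this; linarith
      rw [Real.norm_eq_abs, abs_mul, abs_pow, abs_of_nonneg hH,
        abs_of_nonneg (by positivity : (0:ℝ) ≤ r ^ 2)]
      have h2 : |y| ^ (2 * n) ≤ (r ^ 2) ^ n := by
        rw [pow_mul, ← abs_pow]
        refine pow_le_pow_left₀ (abs_nonneg _) ?_ n
        rw [abs_pow]
        exact pow_le_pow_left₀ (abs_nonneg y) hyr 2
      exact mul_le_mul hHle h2 (by positivity) (by positivity))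
    (Set.mem_Ioo.2 ⟨by linarith, hr0⟩)
    (by
      refine summable_zero.congr (fun n => ?_)
      simp [zero_pow (Nat.succ_ne_zero (2 * n))])
    hmem
  exact key

lemma tsum_W_eq {s : ℝ} (h0 : 0 < s) (h1 : s < 1) :
    (∑' n : ℕ, (harmonic (n + 1) : ℝ) * s ^ (2 * n)) =
      -Real.log (1 - s ^ 2) / (s ^ 2 * (1 - s ^ 2)) := by
  have hs2 : |s ^ 2| < 1 := by rw [abs_of_nonneg (by positivity)]; nlinarith
  have h := (hasSum_harmonic_geom hs2).mul_left (s ^ 2)⁻¹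
  have hne : (s : ℝ) ^ 2 ≠ 0 := by positivity
  have e : (fun n : ℕ => (s ^ 2)⁻¹ * ((harmonic (n + 1) : ℝ) * (s ^ 2) ^ (n + 1))) =
      fun n : ℕ => (harmonic (n + 1) : ℝ) * s ^ (2 * n) := by
    funext n
    rw [pow_succ', pow_mul]
    field_simp
    ring
  rw [e] at h
  rw [h.tsum_eq]
  field_simp

noncomputable def PhiAux (s : ℝ) : ℝ :=
  Real.log (1 - s) / s + Real.log (1 + s) / s
    + ((-1 + Real.log 2 / 2) + (1 / 4) * (Real.log (1 - s) + Real.log (1 + s)))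
        * (Real.log (1 - s) - Real.log (1 + s))
    + (Li2 ((1 + s) / 2) - Li2 ((1 - s) / 2)) / 2

lemma hasDerivAt_PhiAux {s : ℝ} (h0 : 0 < s) (h1 : s < 1) :
    HasDerivAt PhiAux (-Real.log (1 - s ^ 2) / (s ^ 2 * (1 - s ^ 2))) s := by
  have hm : (0:ℝ) < 1 - s := by linarith
  have hp : (0:ℝ) < 1 + s := by linarith
  have hmne : (1:ℝ) - s ≠ 0 := ne_of_gt hm
  have hpne : (1:ℝ) + s ≠ 0 := ne_of_gt hp
  have hsne : s ≠ 0 := ne_of_gt h0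
  -- basic log derivatives
  have ha : HasDerivAt (fun y : ℝ => Real.log (1 - y)) (-1 / (1 - s)) s := by
    have h := ((hasDerivAt_id s).const_sub 1).log hmne
    simpa using h
  have hb : HasDerivAt (fun y : ℝ => Real.log (1 + y)) (1 / (1 + s)) s := by
    have h := ((hasDerivAt_id s).const_add 1).log hpne
    simpa using h
  -- term 1 and 2
  have t1 := ha.div (hasDerivAt_id s) hsne
  have t2 := hb.div (hasDerivAt_id s) hsne
  -- term 3
  have hu : HasDerivAt (fun y : ℝ => (-1 + Real.log 2 / 2)
      + (1 / 4) * (Real.log (1 - y) + Real.log (1 + y)))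
      ((1 / 4) * (-1 / (1 - s) + 1 / (1 + s))) s :=
    (((ha.add hb).const_mul (1 / 4 : ℝ)).const_add (-1 + Real.log 2 / 2))
  have hv : HasDerivAt (fun y : ℝ => Real.log (1 - y) - Real.log (1 + y))
      (-1 / (1 - s) - 1 / (1 + s)) s := ha.sub hb
  have t3 := hu.mul hv
  -- term 4
  have hin1 : HasDerivAt (fun y : ℝ => (1 + y) / 2) (1 / 2 : ℝ) s := by
    have h := ((hasDerivAt_id s).const_add 1).div_const (2 : ℝ)
    simpa using h
  have hin2 : HasDerivAt (fun y : ℝ => (1 - y) / 2) (-(1 / 2) : ℝ) s := by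
    have h := ((hasDerivAt_id s).const_sub 1).div_const (2 : ℝ)
    have e : (-1 : ℝ) / 2 = -(1 / 2) := by norm_num
    rw [e] at h
    exact h
  have hL1 : HasDerivAt (fun y : ℝ => Li2 ((1 + y) / 2))
      ((-Real.log (1 - (1 + s) / 2) / ((1 + s) / 2)) * (1 / 2)) s :=
    (hasDerivAt_Li2 (by linarith) (by linarith)).comp s hin1
  have hL2 : HasDerivAt (fun y : ℝ => Li2 ((1 - y) / 2))
      ((-Real.log (1 - (1 - s) / 2) / ((1 - s) / 2)) * (-(1 / 2))) s :=
    (hasDerivAt_Li2 (by linarith) (by linarith)).comp s hin2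
  have t4 := (hL1.sub hL2).div_const (2 : ℝ)
  have total := ((t1.add t2).add t3).add t4
  have htotal : HasDerivAt PhiAux
      (((-1 / (1 - s) * s - Real.log (1 - s) * 1) / s ^ 2 +
          (1 / (1 + s) * s - Real.log (1 + s) * 1) / s ^ 2 +
          ((1 / 4) * (-1 / (1 - s) + 1 / (1 + s)) *
              (Real.log (1 - s) - Real.log (1 + s)) +
            ((-1 + Real.log 2 / 2) + (1 / 4) * (Real.log (1 - s) + Real.log (1 + s))) *
              (-1 / (1 - s) - 1 / (1 + s))) +
          ((-Real.log (1 - (1 + s) / 2) / ((1 + s) / 2)) * (1 / 2) -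
              (-Real.log (1 - (1 - s) / 2) / ((1 - s) / 2)) * (-(1 / 2))) / 2)) s := total
  convert htotal using 1
  rw [show (1 : ℝ) - (1 + s) / 2 = (1 - s) / 2 by ring,
    show (1 : ℝ) - (1 - s) / 2 = (1 + s) / 2 by ring,
    Real.log_div hmne two_ne_zero, Real.log_div hpne two_ne_zero,
    show (1 : ℝ) - s ^ 2 = (1 - s) * (1 + s) by ring,
    Real.log_mul hmne hpne]
  field_simp
  ring

lemma hasDerivAt_diff_zero {x : ℝ} (h0 : 0 < x) (h1 : x < 1) :
    HasDerivAt (fun y => PhiAux y - PsiAux y) 0 x := by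
  have hx : |x| < 1 := abs_lt.2 ⟨by linarith, h1⟩
  have hPsi := hasDerivAt_PsiAux hx
  rw [tsum_W_eq h0 h1] at hPsi
  have h := (hasDerivAt_PhiAux h0 h1).sub hPsi
  rw [sub_self] at h
  exact h

lemma PhiAux_eq_PsiAux {s : ℝ} (h0 : 0 < s) (h1 : s < 1) : PhiAux s = PsiAux s := by
  set f : ℝ → ℝ := fun y => PhiAux y - PsiAux y with hf
  -- f is constant on (0,1)
  have hconst : ∀ a b : ℝ, 0 < a → a ≤ b → b < 1 → f b = f a := by
    intro a b ha hab hb1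
    have hcont : ContinuousOn f (Set.Icc a b) := by
      intro y hy
      exact (hasDerivAt_diff_zero (lt_of_lt_of_le ha hy.1)
        (lt_of_le_of_lt hy.2 hb1)).continuousAt.continuousWithinAt
    have hderiv : ∀ y ∈ Set.Ico a b, HasDerivWithinAt f 0 (Set.Ici y) y := by
      intro y hy
      exact (hasDerivAt_diff_zero (lt_of_lt_of_le ha hy.1)
        (lt_trans hy.2 hb1)).hasDerivWithinAt
    exact constant_of_has_deriv_right_zero hcont hderiv b (Set.right_mem_Icc.2 hab)
  -- f tends to 0 at 0⁺
  have htend0 : Tendsto f (𝓝[>] (0:ℝ)) (𝓝 0) := by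
    -- Psi part
    have hPsi0 : PsiAux 0 = 0 := by
      rw [PsiAux]
      have e : (fun n : ℕ => (harmonic (n + 1) : ℝ) * (0:ℝ) ^ (2 * n + 1) / (2 * (n : ℝ) + 1)) =
          fun _ : ℕ => (0:ℝ) := by
        funext n
        rw [zero_pow (by omega : 2 * n + 1 ≠ 0)]
        ring
      rw [e, tsum_zero]
    have hPsiT : Tendsto PsiAux (𝓝[>] (0:ℝ)) (𝓝 0) := by
      have := (hasDerivAt_PsiAux (x := 0) (by norm_num)).continuousAt.tendsto
      rw [hPsi0] at this
      exact this.mono_left nhdsWithin_le_nhds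
    -- Phi part
    have hT1 : Tendsto (fun y : ℝ => Real.log (1 - y) / y) (𝓝[>] (0:ℝ)) (𝓝 (-1)) := by
      have ha : HasDerivAt (fun y : ℝ => Real.log (1 - y)) (-1) 0 := by
        have h := ((hasDerivAt_id (0:ℝ)).const_sub 1).log (by norm_num)
        simpa using h
      have hslope := hasDerivAt_iff_tendsto_slope.1 ha
      have hmono : 𝓝[>] (0:ℝ) ≤ 𝓝[≠] (0:ℝ) :=
        nhdsWithin_mono 0 fun y hy => ne_of_gt hy
      refine (hslope.mono_left hmono).congr' ?_
      filter_upwards [self_mem_nhdsWithin] with y hy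
      have hyne : y ≠ 0 := ne_of_gt hy
      simp [slope_def_field, Real.log_one]
    have hT2 : Tendsto (fun y : ℝ => Real.log (1 + y) / y) (𝓝[>] (0:ℝ)) (𝓝 1) := by
      have hb : HasDerivAt (fun y : ℝ => Real.log (1 + y)) 1 0 := by
        have h := ((hasDerivAt_id (0:ℝ)).const_add 1).log (by norm_num)
        simpa using h
      have hslope := hasDerivAt_iff_tendsto_slope.1 hb
      have hmono : 𝓝[>] (0:ℝ) ≤ 𝓝[≠] (0:ℝ) :=
        nhdsWithin_mono 0 fun y hy => ne_of_gt hy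
      refine (hslope.mono_left hmono).congr' ?_
      filter_upwards [self_mem_nhdsWithin] with y hy
      simp [slope_def_field, Real.log_one]
    have hrest : Tendsto (fun y : ℝ =>
        ((-1 + Real.log 2 / 2) + (1 / 4) * (Real.log (1 - y) + Real.log (1 + y)))
          * (Real.log (1 - y) - Real.log (1 + y))
        + (Li2 ((1 + y) / 2) - Li2 ((1 - y) / 2)) / 2) (𝓝[>] (0:ℝ)) (𝓝 0) := by
      have ha : HasDerivAt (fun y : ℝ => Real.log (1 - y)) (-1 / (1 - 0)) 0 := by
        have h := ((hasDerivAt_id (0:ℝ)).const_sub 1).log (by norm_num)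
        simpa using h
      have hb : HasDerivAt (fun y : ℝ => Real.log (1 + y)) (1 / (1 + 0)) 0 := by
        have h := ((hasDerivAt_id (0:ℝ)).const_add 1).log (by norm_num)
        simpa using h
      have hin1 : HasDerivAt (fun y : ℝ => (1 + y) / 2) (1 / 2 : ℝ) 0 := by
        have h := ((hasDerivAt_id (0:ℝ)).const_add 1).div_const (2 : ℝ)
        simpa using h
      have hin2 : HasDerivAt (fun y : ℝ => (1 - y) / 2) (-1 / 2 : ℝ) 0 := by
        have h := ((hasDerivAt_id (0:ℝ)).const_sub 1).div_const (2 : ℝ)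
        simpa using h
      have hL1 : ContinuousAt (fun y : ℝ => Li2 ((1 + y) / 2)) 0 := by
        have h := (hasDerivAt_Li2 (x := (1 + (0:ℝ)) / 2) (by norm_num) (by norm_num)).comp 0
          hin1
        exact h.continuousAt
      have hL2 : ContinuousAt (fun y : ℝ => Li2 ((1 - y) / 2)) 0 := by
        have h := (hasDerivAt_Li2 (x := (1 - (0:ℝ)) / 2) (by norm_num) (by norm_num)).comp 0
          hin2
        exact h.continuousAt
      have hca := ha.continuousAt
      have hcb := hb.continuousAt
      have hcont : ContinuousAt (fun y : ℝ =>
          ((-1 + Real.log 2 / 2) + (1 / 4) * (Real.log (1 - y) + Real.log (1 + y)))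
            * (Real.log (1 - y) - Real.log (1 + y))
          + (Li2 ((1 + y) / 2) - Li2 ((1 - y) / 2)) / 2) 0 :=
        ((continuousAt_const.add (continuousAt_const.mul (hca.add hcb))).mul
          (hca.sub hcb)).add ((hL1.sub hL2).div_const 2)
      have hT := hcont.tendsto.mono_left (nhdsWithin_le_nhds (s := Set.Ioi (0:ℝ)))
      convert hT using 2
      norm_num
    have hPhiT : Tendsto PhiAux (𝓝[>] (0:ℝ)) (𝓝 0) := by
      have h := (hT1.add hT2).add hrest
      have h' : Tendsto PhiAux (𝓝[>] (0:ℝ)) (𝓝 (-1 + 1 + 0)) := by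
        refine Tendsto.congr (fun y => ?_) h
        rw [PhiAux]
        ring
      simpa using h'
    have := hPhiT.sub hPsiT
    simpa using this
  have hC : Tendsto f (𝓝[>] (0:ℝ)) (𝓝 (f s)) := by
    refine tendsto_const_nhds.congr' ?_
    filter_upwards [Ioo_mem_nhdsGT h0] with y hy
    exact hconst y s hy.1 hy.2.le h1
  have hfs : f s = 0 := tendsto_nhds_unique hC htend0
  have : PhiAux s - PsiAux s = 0 := hfs
  linarith

lemma summable_Psi {s : ℝ} (hs : |s| < 1) :
    Summable (fun n : ℕ => (harmonic (n + 1) : ℝ) * s ^ (2 * n + 1) / (2 * (n : ℝ) + 1)) := by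
  have hs2 : |s ^ 2| < 1 := by
    rw [abs_of_nonneg (by positivity), ← sq_abs]; nlinarith [abs_nonneg s]
  refine Summable.of_norm_bounded (summable_linear_geom hs2) fun n => ?_
  have hH : (0:ℝ) ≤ (harmonic (n+1) : ℝ) :=
    Rat.cast_nonneg.mpr (harmonic_pos (Nat.succ_ne_zero n)).le
  have hHle : (harmonic (n+1) : ℝ) ≤ (n : ℝ) + 1 := by
    have := harmonic_cast_le (n + 1); push_cast at this; linarith
  have hd : (1:ℝ) ≤ 2 * (n : ℝ) + 1 := by
    have := Nat.cast_nonneg (α := ℝ) n; linarith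
  rw [Real.norm_eq_abs, abs_div, abs_mul, abs_of_nonneg hH, abs_pow,
    abs_of_nonneg (by linarith : (0:ℝ) ≤ 2 * (n : ℝ) + 1),
    abs_of_nonneg (by positivity : (0:ℝ) ≤ s ^ 2)]
  have hb : |s| ^ (2 * n + 1) ≤ (s ^ 2) ^ n := by
    calc |s| ^ (2 * n + 1) = (|s| ^ 2) ^ n * |s| := by rw [← pow_mul, pow_succ]
      _ ≤ (|s| ^ 2) ^ n * 1 := by
          refine mul_le_mul_of_nonneg_left hs.le (by positivity)
      _ = (s ^ 2) ^ n := by rw [mul_one, sq_abs]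
  calc (harmonic (n+1) : ℝ) * |s| ^ (2 * n + 1) / (2 * (n : ℝ) + 1)
      ≤ (harmonic (n+1) : ℝ) * |s| ^ (2 * n + 1) / 1 := by gcongr
    _ = (harmonic (n+1) : ℝ) * |s| ^ (2 * n + 1) := div_one _
    _ ≤ ((n : ℝ) + 1) * (s ^ 2) ^ n := mul_le_mul hHle hb (by positivity) (by positivity)

theorem stmt5 (t : ℝ) (ht0 : 0 ≤ t) (ht1 : t < 1) :
    HasSum (fun n : ℕ => (harmonic (n + 1) : ℝ) * t ^ (n + 1) / (2 * (n + 1) - 1))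
      (Real.log (1 - t) +
        (-1 + Real.log (Real.sqrt 2) + (1 / 4) * Real.log (1 - t)) * Real.sqrt t *
          Real.log ((1 - Real.sqrt t) / (1 + Real.sqrt t)) +
        (Real.sqrt t / 2) * (Li2 ((1 + Real.sqrt t) / 2) - Li2 ((1 - Real.sqrt t) / 2))) := by
  rcases eq_or_lt_of_le ht0 with h | h
  · -- t = 0
    rw [← h]
    have e : (fun n : ℕ => (harmonic (n + 1) : ℝ) * (0:ℝ) ^ (n + 1) / (2 * ((n:ℝ) + 1) - 1))
        = fun _ : ℕ => (0:ℝ) := by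
      funext n
      rw [zero_pow (Nat.succ_ne_zero n), mul_zero, zero_div]
    rw [e]
    norm_num [Real.sqrt_zero, Real.log_one]
  · set s := Real.sqrt t with hsdef
    have hs0 : 0 < s := Real.sqrt_pos.2 h
    have hs1 : s < 1 := by
      have h2 := Real.sq_sqrt ht0
      nlinarith [Real.sqrt_nonneg t]
    have habs : |s| < 1 := abs_lt.2 ⟨by linarith, hs1⟩
    have ht2 : t = s ^ 2 := (Real.sq_sqrt ht0).symm
    have hmne : (1:ℝ) - s ≠ 0 := by intro hc; nlinarith
    have hpne : (1:ℝ) + s ≠ 0 := by positivity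
    have hMul := ((summable_Psi habs).hasSum).mul_left s
    have hPsiPhi : (∑' n : ℕ, (harmonic (n + 1) : ℝ) * s ^ (2 * n + 1) / (2 * (n : ℝ) + 1))
        = PhiAux s := (PhiAux_eq_PsiAux hs0 hs1).symm
    rw [hPsiPhi] at hMul
    have e : (fun n : ℕ => s * ((harmonic (n + 1) : ℝ) * s ^ (2 * n + 1) / (2 * (n : ℝ) + 1)))
        = fun n : ℕ => (harmonic (n + 1) : ℝ) * t ^ (n + 1) / (2 * ((n : ℝ) + 1) - 1) := by
      funext n
      have hEq : 2 * ((n : ℝ) + 1) - 1 = 2 * (n : ℝ) + 1 := by ring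
      rw [ht2, ← pow_mul, hEq, show (2 : ℕ) * (n + 1) = 2 * n + 1 + 1 by omega, pow_succ]
      ring
    rw [e] at hMul
    have hval : s * PhiAux s =
        Real.log (1 - t) +
          (-1 + Real.log (Real.sqrt 2) + (1 / 4) * Real.log (1 - t)) * s *
            Real.log ((1 - s) / (1 + s)) +
          (s / 2) * (Li2 ((1 + s) / 2) - Li2 ((1 - s) / 2)) := by
      rw [PhiAux, ht2, Real.log_sqrt (by norm_num : (0:ℝ) ≤ 2),
        Real.log_div hmne hpne,
        show (1:ℝ) - s ^ 2 = (1 - s) * (1 + s) by ring,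
        Real.log_mul hmne hpne]
      field_simp
    rw [← hval]
    exact hMul
end

section
/- For every real z with 0 ≤ z < 1, setting t = z/(1+z), the series ∑_{n=0}^∞ (binom(2n,n))⁻¹ · (−1)^n · 4^n · z^n converges and equals (1/(1+z)) · [ 1 + (1/2) · √t · log((1−√t)/(1+√t)) ]. -/
open Real Filter Topology
noncomputable def cc (n : ℕ) : ℝ := (-4) ^ n / (Nat.centralBinom n : ℝ)
noncomputable def SS (z : ℝ) : ℝ := ∑' n : ℕ, cc n * z ^ n
lemma cB_pos (n : ℕ) : (0:ℝ) < (Nat.centralBinom n : ℝ) := by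
  exact_mod_cast Nat.centralBinom_pos n
lemma cc_abs (n : ℕ) : |cc n| ≤ 2 * n + 1 := by
  have h4 : (4:ℝ) ^ n ≤ (2 * n + 1) * (Nat.centralBinom n : ℝ) := by
    exact_mod_cast Nat.four_pow_le_two_mul_add_one_mul_central_binom n
  rw [cc, abs_div, abs_pow, abs_of_pos (cB_pos n), div_le_iff₀ (cB_pos n)]
  calc |(-4:ℝ)| ^ n = 4 ^ n := by norm_num
    _ ≤ (2 * n + 1) * (Nat.centralBinom n : ℝ) := h4

lemma cc_rec (n : ℕ) : (2 * (n:ℝ) + 1) * cc (n + 1) = -(2 * n + 2) * cc n := by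
  have hR : ((n:ℝ) + 1) * (Nat.centralBinom (n+1) : ℝ)
      = 2 * (2 * n + 1) * (Nat.centralBinom n : ℝ) := by
    exact_mod_cast Nat.succ_mul_centralBinom_succ n
  have h1 := (cB_pos n).ne'
  have h2 := (cB_pos (n+1)).ne'
  rw [cc, cc]
  field_simp
  linear_combination (2 * (-4:ℝ)^n) * hR

lemma aux_summable1 {r : ℝ} (hr0 : 0 ≤ r) (hr : r < 1) :
    Summable (fun n : ℕ => (2 * (n:ℝ) + 1) * r ^ n) := by
  have hr' : ‖r‖ < 1 := by rwa [norm_of_nonneg hr0]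
  have h1 : Summable (fun n : ℕ => (n:ℝ) * r ^ n) := by
    simpa using summable_pow_mul_geometric_of_norm_lt_one 1 hr'
  have h2 : Summable (fun n : ℕ => r ^ n) := summable_geometric_of_lt_one hr0 hr
  simpa [two_mul, add_mul, mul_assoc] using (h1.mul_left 2).add h2

lemma summable_SS {z : ℝ} (hz : |z| < 1) : Summable (fun n : ℕ => cc n * z ^ n) := by
  apply Summable.of_norm
  apply Summable.of_nonneg_of_le (fun n => norm_nonneg _)
    (fun n => ?_) (aux_summable1 (abs_nonneg z) hz)
  rw [norm_mul, norm_pow]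
  calc ‖cc n‖ * ‖z‖ ^ n ≤ (2 * n + 1) * ‖z‖ ^ n := by
        apply mul_le_mul_of_nonneg_right (cc_abs n) (by positivity)
    _ = (2 * n + 1) * |z| ^ n := by rw [Real.norm_eq_abs]

lemma aux_summable2 {r : ℝ} (hr2 : 1/2 ≤ r) (hr : r < 1) :
    Summable (fun n : ℕ => 2 * (2 * (n:ℝ) + 1) * ((n:ℝ) * r ^ (n - 1))) := by
  have hr0 : 0 < r := by linarith
  have hr' : ‖r‖ < 1 := by rw [norm_of_nonneg hr0.le]; exact hr
  have h1 : Summable (fun n : ℕ => ((n:ℝ))^2 * r ^ n) :=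
    summable_pow_mul_geometric_of_norm_lt_one 2 hr'
  have h2 : Summable (fun n : ℕ => (n:ℝ) * r ^ n) := by
    simpa using summable_pow_mul_geometric_of_norm_lt_one 1 hr'
  have key : Summable (fun n : ℕ => 8 * (((n:ℝ))^2 * r ^ n) + 4 * ((n:ℝ) * r ^ n)) :=
    (h1.mul_left 8).add (h2.mul_left 4)
  apply key.of_nonneg_of_le
  · intro n; positivity
  · intro n
    rcases Nat.eq_zero_or_pos n with h | h
    · subst h; simp
    · have hpow : r ^ (n - 1) = r ^ n / r := by
        rw [eq_div_iff hr0.ne', ← pow_succ]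
        congr 1; omega
      have hdb : r ^ n / r ≤ 2 * r ^ n := by
        rw [div_le_iff₀ hr0]
        nlinarith [pow_nonneg hr0.le n]
      rw [hpow]
      calc 2 * (2 * (n:ℝ) + 1) * ((n:ℝ) * (r ^ n / r))
          ≤ 2 * (2 * (n:ℝ) + 1) * ((n:ℝ) * (2 * r ^ n)) := by
            gcongr
        _ = 8 * (((n:ℝ))^2 * r ^ n) + 4 * ((n:ℝ) * r ^ n) := by ring

lemma ball_facts {x : ℝ} (hx : |x| < 1) :
    1/2 ≤ (1 + |x|)/2 ∧ (1 + |x|)/2 < 1 ∧ |x| < (1 + |x|)/2 := by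
  have := abs_nonneg x
  constructor
  · linarith
  constructor
  · linarith
  · linarith

lemma summable_SS' {z : ℝ} (hz : |z| < 1) :
    Summable (fun n : ℕ => cc n * ((n:ℝ) * z ^ (n - 1))) := by
  obtain ⟨h2, h1, hlt⟩ := ball_facts hz
  apply Summable.of_norm
  apply Summable.of_nonneg_of_le (fun n => norm_nonneg _) (fun n => ?_) (aux_summable2 h2 h1)
  have hz0 : (0:ℝ) ≤ (1 + |z|)/2 := by linarith
  rw [norm_mul, norm_mul, norm_pow, Real.norm_eq_abs, Real.norm_eq_abs, Real.norm_eq_abs,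
    Nat.abs_cast]
  calc |cc n| * ((n:ℝ) * |z| ^ (n-1))
      ≤ (2*(n:ℝ)+1) * ((n:ℝ) * ((1 + |z|)/2) ^ (n-1)) := by
        apply mul_le_mul (cc_abs n) _ (by positivity) (by positivity)
        exact mul_le_mul_of_nonneg_left
          (pow_le_pow_left₀ (abs_nonneg z) hlt.le _) (Nat.cast_nonneg n)
    _ ≤ 2 * (2*(n:ℝ)+1) * ((n:ℝ) * ((1 + |z|)/2) ^ (n-1)) := by nlinarith [mul_nonneg (Nat.cast_nonneg n : (0:ℝ) ≤ n) (pow_nonneg hz0 (n-1)), mul_nonneg (mul_nonneg (by positivity : (0:ℝ) ≤ 2*(n:ℝ)+1) (Nat.cast_nonneg n : (0:ℝ) ≤ n)) (pow_nonneg hz0 (n-1))]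

lemma hasDerivAt_SS {x : ℝ} (hx : |x| < 1) :
    HasDerivAt SS (∑' n : ℕ, cc n * ((n:ℝ) * x ^ (n - 1))) x := by
  obtain ⟨h2, h1, hlt⟩ := ball_facts hx
  set r := (1 + |x|)/2 with hr
  have hr0 : (0:ℝ) < r := by rw [hr]; linarith [abs_nonneg x]
  apply hasDerivAt_tsum_of_isPreconnected (aux_summable2 h2 h1)
    (Metric.isOpen_ball (x := (0:ℝ)) (ε := r)) (convex_ball (0:ℝ) r).isPreconnected
    (g := fun n z => cc n * z ^ n) (g' := fun n y => cc n * ((n:ℝ) * y ^ (n - 1)))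
    (y₀ := 0)
  · intro n y hy
    exact (hasDerivAt_pow n y).const_mul (cc n)
  · intro n y hy
    rw [Metric.mem_ball, dist_zero_right, Real.norm_eq_abs] at hy
    rw [norm_mul, norm_mul, norm_pow, Real.norm_eq_abs, Real.norm_eq_abs, Real.norm_eq_abs,
      Nat.abs_cast]
    calc |cc n| * ((n:ℝ) * |y| ^ (n-1))
        ≤ (2*(n:ℝ)+1) * ((n:ℝ) * r ^ (n-1)) := by
          apply mul_le_mul (cc_abs n) _ (by positivity) (by positivity)
          exact mul_le_mul_of_nonneg_left
            (pow_le_pow_left₀ (abs_nonneg y) hy.le _) (Nat.cast_nonneg n)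
      _ ≤ 2 * (2*(n:ℝ)+1) * ((n:ℝ) * r ^ (n-1)) := by
          nlinarith [mul_nonneg (Nat.cast_nonneg n : (0:ℝ) ≤ n) (pow_nonneg hr0.le (n-1)),
            mul_nonneg (mul_nonneg (by positivity : (0:ℝ) ≤ 2*(n:ℝ)+1)
              (Nat.cast_nonneg n : (0:ℝ) ≤ n)) (pow_nonneg hr0.le (n-1))]
  · simpa [Metric.mem_ball] using hr0
  · exact summable_SS (by simp : |(0:ℝ)| < 1)
  · simpa [Metric.mem_ball, Real.norm_eq_abs] using hlt

noncomputable def GG (u : ℝ) : ℝ := ∑' k : ℕ, u ^ (k + 1) / (2 * k + 1)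

lemma twok1_pos (k : ℕ) : (0:ℝ) < 2 * k + 1 := by positivity

lemma summable_GG {u : ℝ} (hu : |u| < 1) :
    Summable (fun k : ℕ => u ^ (k + 1) / (2 * (k:ℝ) + 1)) := by
  apply Summable.of_norm
  have hgeo : Summable (fun k : ℕ => |u| ^ (k+1)) := by
    apply ((summable_geometric_of_lt_one (abs_nonneg u) hu).mul_left |u|).congr
    intro k; rw [pow_succ, mul_comm]
  apply Summable.of_nonneg_of_le (fun k => norm_nonneg _) (fun k => ?_) hgeo
  rw [Real.norm_eq_abs, abs_div, abs_pow]
  rw [abs_of_pos (twok1_pos k)]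
  exact div_le_self (pow_nonneg (abs_nonneg u) _) (by norm_num [twok1_pos k] : (1:ℝ) ≤ 2 * k + 1)

lemma summable_GG' {u : ℝ} (hu : |u| < 1) :
    Summable (fun k : ℕ => ((k:ℝ) + 1) * u ^ k / (2 * (k:ℝ) + 1)) := by
  apply Summable.of_norm
  have h1 : Summable (fun k : ℕ => (k:ℝ) * |u| ^ k) := by
    simpa using summable_pow_mul_geometric_of_norm_lt_one 1
      (by rwa [Real.norm_eq_abs, abs_abs] : ‖|u|‖ < 1)
  have h2 : Summable (fun k : ℕ => |u| ^ k) := summable_geometric_of_lt_one (abs_nonneg u) hu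
  apply Summable.of_nonneg_of_le (fun k => norm_nonneg _) (fun k => ?_) (h1.add h2)
  rw [Real.norm_eq_abs, abs_div, abs_mul, abs_pow, abs_of_pos (twok1_pos k),
    abs_of_pos (by positivity : (0:ℝ) < (k:ℝ) + 1)]
  calc ((k:ℝ) + 1) * |u| ^ k / (2 * k + 1) ≤ ((k:ℝ) + 1) * |u| ^ k := by
        exact div_le_self (by positivity) (by norm_num [twok1_pos k] : (1:ℝ) ≤ 2 * k + 1)
    _ = (k:ℝ) * |u| ^ k + |u| ^ k := by ring

lemma summable_aux3 {r : ℝ} (hr0 : 0 ≤ r) (hr : r < 1) :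
    Summable (fun k : ℕ => ((k:ℝ) + 1) * r ^ k) := by
  have h1 : Summable (fun k : ℕ => (k:ℝ) * r ^ k) := by
    simpa using summable_pow_mul_geometric_of_norm_lt_one 1
      (by rwa [Real.norm_eq_abs, abs_of_nonneg hr0] : ‖r‖ < 1)
  have h2 : Summable (fun k : ℕ => r ^ k) := summable_geometric_of_lt_one hr0 hr
  apply (h1.add h2).congr
  intro k; ring

lemma hasDerivAt_GG {x : ℝ} (hx : |x| < 1) :
    HasDerivAt GG (∑' k : ℕ, ((k:ℝ) + 1) * x ^ k / (2 * (k:ℝ) + 1)) x := by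
  obtain ⟨h2, h1, hlt⟩ := ball_facts hx
  set r := (1 + |x|)/2 with hr
  have hr0 : (0:ℝ) < r := by rw [hr]; linarith [abs_nonneg x]
  show HasDerivAt (fun u : ℝ => ∑' k : ℕ, u ^ (k+1) / (2 * (k:ℝ) + 1)) _ x
  apply hasDerivAt_tsum_of_isPreconnected (summable_aux3 hr0.le h1)
    (Metric.isOpen_ball (x := (0:ℝ)) (ε := r)) (convex_ball (0:ℝ) r).isPreconnected
    (g := fun (k : ℕ) u => u ^ (k+1) / (2 * (k:ℝ) + 1))
    (g' := fun k y => ((k:ℝ) + 1) * y ^ k / (2 * (k:ℝ) + 1))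
    (y₀ := 0)
  · intro k y hy
    have h := (hasDerivAt_pow (k+1) y).div_const (2 * (k:ℝ) + 1)
    simpa [Nat.add_sub_cancel] using h
  · intro k y hy
    rw [Metric.mem_ball, dist_zero_right, Real.norm_eq_abs] at hy
    rw [Real.norm_eq_abs, abs_div, abs_mul, abs_pow, abs_of_pos (twok1_pos k),
      abs_of_pos (by positivity : (0:ℝ) < (k:ℝ) + 1)]
    calc ((k:ℝ) + 1) * |y| ^ k / (2 * k + 1) ≤ ((k:ℝ) + 1) * |y| ^ k := by
          exact div_le_self (by positivity) (by norm_num [twok1_pos k] : (1:ℝ) ≤ 2 * k + 1)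
      _ ≤ ((k:ℝ) + 1) * r ^ k := by
          exact mul_le_mul_of_nonneg_left (pow_le_pow_left₀ (abs_nonneg y) hy.le _)
            (by positivity)
  · simpa [Metric.mem_ball] using hr0
  · apply summable_GG (by simp : |(0:ℝ)| < 1)
  · simpa [Metric.mem_ball, Real.norm_eq_abs] using hlt

noncomputable def DS (z : ℝ) : ℝ := ∑' n : ℕ, cc n * ((n:ℝ) * z ^ (n - 1))
noncomputable def DG (u : ℝ) : ℝ := ∑' k : ℕ, ((k:ℝ) + 1) * u ^ k / (2 * (k:ℝ) + 1)

lemma hasDerivAt_SS' {x : ℝ} (hx : |x| < 1) : HasDerivAt SS (DS x) x := hasDerivAt_SS hx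
lemma hasDerivAt_GG' {x : ℝ} (hx : |x| < 1) : HasDerivAt GG (DG x) x := hasDerivAt_GG hx

lemma SS_zero : SS 0 = 1 := by
  rw [SS, tsum_eq_single 0 (fun n hn => by simp [zero_pow hn])]
  simp [cc, Nat.centralBinom]

lemma GG_zero : GG 0 = 0 := by simp [GG]

lemma SS_ode {z : ℝ} (hz : |z| < 1) : 2*z*(1+z) * DS z = (1 - 2*z) * SS z - 1 := by
  have h : HasSum (fun n : ℕ => cc n * z ^ n) (SS z) := (summable_SS hz).hasSum
  have hd : HasSum (fun n : ℕ => cc n * ((n:ℝ) * z ^ (n - 1))) (DS z) :=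
    (summable_SS' hz).hasSum
  have hfun : (fun n : ℕ => z * (cc n * ((n:ℝ) * z ^ (n - 1))))
      = fun n : ℕ => (n:ℝ) * (cc n * z ^ n) := by
    funext n
    cases n with
    | zero => simp
    | succ m => rw [Nat.add_sub_cancel, pow_succ]; push_cast; ring
  have hN : HasSum (fun n : ℕ => (n:ℝ) * (cc n * z ^ n)) (z * DS z) :=
    hfun ▸ (hd.mul_left z)
  have hbfun : (fun n : ℕ => 2 * ((n:ℝ) * (cc n * z ^ n)) - cc n * z ^ n)
      = fun n : ℕ => (2*(n:ℝ)-1) * (cc n * z ^ n) := by funext n; ring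
  have hb : HasSum (fun n : ℕ => (2*(n:ℝ)-1) * (cc n * z ^ n)) (2*(z*DS z) - SS z) :=
    hbfun ▸ ((hN.mul_left 2).sub h)
  have hdfun : (fun n : ℕ => 2*z * ((n:ℝ) * (cc n * z ^ n)) + 2*z * (cc n * z ^ n))
      = fun n : ℕ => (2*(n:ℝ)+2) * (cc n * z ^ (n+1)) := by
    funext n; rw [pow_succ]; ring
  have hdsum : HasSum (fun n : ℕ => (2*(n:ℝ)+2) * (cc n * z ^ (n+1)))
      (2*z*(z*DS z) + 2*z*(SS z)) := hdfun ▸ ((hN.mul_left (2*z)).add (h.mul_left (2*z)))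
  have hb1 : HasSum (fun n : ℕ => (2*((n+1:ℕ):ℝ)-1) * (cc (n+1) * z ^ (n+1)))
      ((2*(z*DS z) - SS z) + 1) := by
    apply (hasSum_nat_add_iff (f := fun n : ℕ => (2*(n:ℝ)-1) * (cc n * z ^ n)) 1).mpr
    convert hb using 1
    all_goals try rfl
    simp [cc, Nat.centralBinom_zero]
  have hzero : (fun n : ℕ => ((2*((n+1:ℕ):ℝ)-1) * (cc (n+1) * z ^ (n+1))
      + (2*(n:ℝ)+2) * (cc n * z ^ (n+1)))) = fun _ => (0:ℝ) := by
    funext n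
    have := cc_rec n
    push_cast
    linear_combination z^(n+1) * this
  have htot := hb1.add hdsum
  rw [hzero] at htot
  have h0 : ((2*(z*DS z) - SS z) + 1) + (2*z*(z*DS z) + 2*z*(SS z)) = 0 :=
    htot.unique hasSum_zero
  nlinarith [h0]

lemma GG_ode {u : ℝ} (hu0 : 0 ≤ u) (hu1 : u < 1) :
    2*u*(1-u) * DG u = u + (1-u) * GG u := by
  have hu : |u| < 1 := by rw [abs_of_nonneg hu0]; exact hu1
  have hG : HasSum (fun k : ℕ => u ^ (k+1) / (2 * (k:ℝ) + 1)) (GG u) :=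
    (summable_GG hu).hasSum
  have hdG : HasSum (fun k : ℕ => ((k:ℝ) + 1) * u ^ k / (2 * (k:ℝ) + 1)) (DG u) :=
    (summable_GG' hu).hasSum
  have hgeo : HasSum (fun k : ℕ => u ^ k) (1 - u)⁻¹ :=
    hasSum_geometric_of_lt_one hu0 hu1
  have hfun : (fun k : ℕ => 2*u*(1-u) * (((k:ℝ) + 1) * u ^ k / (2 * (k:ℝ) + 1)))
      = fun k : ℕ => u*(1-u) * u ^ k + (1-u) * (u ^ (k+1) / (2 * (k:ℝ) + 1)) := by
    funext k
    have hk := (twok1_pos k).ne'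
    field_simp
    ring
  have hlhs : HasSum (fun k : ℕ => u*(1-u) * u ^ k + (1-u) * (u ^ (k+1) / (2 * (k:ℝ) + 1)))
      (2*u*(1-u) * DG u) := hfun ▸ (hdG.mul_left (2*u*(1-u)))
  have hrhs : HasSum (fun k : ℕ => u*(1-u) * u ^ k + (1-u) * (u ^ (k+1) / (2 * (k:ℝ) + 1)))
      (u*(1-u) * (1-u)⁻¹ + (1-u) * GG u) := (hgeo.mul_left _).add (hG.mul_left _)
  have h1u : (1:ℝ) - u ≠ 0 := by linarith
  have := hlhs.unique hrhs
  rw [this, mul_assoc, mul_inv_cancel₀ h1u, mul_one]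

noncomputable def FF (z : ℝ) : ℝ := (1 - GG (z / (1 + z))) / (1 + z)

noncomputable def DF (z : ℝ) : ℝ :=
  (-(DG (z/(1+z)) * ((1*(1+z) - z*1)/(1+z)^2)) * (1+z) - (1 - GG (z/(1+z))) * 1) / (1+z)^2

lemma t_mem {z : ℝ} (hz0 : 0 ≤ z) (hz1 : z < 1) :
    0 ≤ z/(1+z) ∧ z/(1+z) < 1 := by
  have h1z : (0:ℝ) < 1 + z := by linarith
  constructor
  · positivity
  · rw [div_lt_one h1z]; linarith

lemma hasDerivAt_FF {z : ℝ} (hz0 : 0 ≤ z) (hz1 : z < 1) : HasDerivAt FF (DF z) z := by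
  have h1z : (0:ℝ) < 1 + z := by linarith
  obtain ⟨hu0, hu1⟩ := t_mem hz0 hz1
  have hu : |z/(1+z)| < 1 := by rw [abs_of_nonneg hu0]; exact hu1
  have hden : HasDerivAt (fun w : ℝ => 1 + w) 1 z := (hasDerivAt_id z).const_add 1
  have ht : HasDerivAt (fun w : ℝ => w / (1 + w)) ((1*(1+z) - z*1)/(1+z)^2) z :=
    (hasDerivAt_id z).div hden h1z.ne'
  have hcomp : HasDerivAt (fun w : ℝ => GG (w / (1 + w)))
      (DG (z/(1+z)) * ((1*(1+z) - z*1)/(1+z)^2)) z :=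
    by have := HasDerivAt.comp z (h₂ := GG) (hasDerivAt_GG' hu) ht; exact this
  have hN : HasDerivAt (fun w : ℝ => 1 - GG (w / (1 + w)))
      (-(DG (z/(1+z)) * ((1*(1+z) - z*1)/(1+z)^2))) z := hcomp.const_sub 1
  exact hN.div hden h1z.ne'

lemma FF_ode {z : ℝ} (hz0 : 0 ≤ z) (hz1 : z < 1) :
    2*z*(1+z) * DF z = (1 - 2*z) * FF z - 1 := by
  have h1z : (0:ℝ) < 1 + z := by linarith
  obtain ⟨hu0, hu1⟩ := t_mem hz0 hz1
  have hrel := GG_ode hu0 hu1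
  rw [DF, FF]
  have h1z' := h1z.ne'
  field_simp at hrel ⊢
  linear_combination -hrel

lemma key_ode {z : ℝ} (hz0 : 0 ≤ z) (hz1 : z < 1) :
    2*z*(1+z) * (DS z - DF z) = (1 - 2*z) * (SS z - FF z) := by
  have h1 := SS_ode (by rw [abs_of_nonneg hz0]; exact hz1)
  have h2 := FF_ode hz0 hz1
  linear_combination h1 - h2

lemma hasDerivAt_EE {z : ℝ} (hz0 : 0 < z) (hz1 : z < 1) :
    HasDerivAt (fun w => (SS w - FF w)^2 * (1+w)^3 / w) 0 z := by
  have hz : |z| < 1 := by rw [abs_of_nonneg hz0.le]; exact hz1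
  have hD : HasDerivAt (fun w => SS w - FF w) (DS z - DF z) z :=
    (hasDerivAt_SS' hz).sub (hasDerivAt_FF hz0.le hz1)
  have hpow := hD.pow 2
  have hcube := ((hasDerivAt_id z).const_add 1).pow 3
  have hnum := hpow.mul hcube
  have hE := hnum.div (hasDerivAt_id z) hz0.ne'
  convert hE using 1
  all_goals try rfl
  have hkey := key_ode hz0.le hz1
  have hz' : z ≠ 0 := hz0.ne'
  simp only [id, Pi.pow_apply, Pi.mul_apply]
  field_simp
  linear_combination (-(1+z)^2*(SS z - FF z)) * hkey

lemma EE_eq {x y : ℝ} (hx : 0 < x) (hxy : x ≤ y) (hy : y < 1) :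
    (SS y - FF y)^2 * (1+y)^3 / y = (SS x - FF x)^2 * (1+x)^3 / x := by
  have hcont : ContinuousOn (fun w => (SS w - FF w)^2 * (1+w)^3 / w) (Set.Icc x y) := by
    intro w hw
    exact (hasDerivAt_EE (lt_of_lt_of_le hx hw.1) (lt_of_le_of_lt hw.2 hy)).continuousAt.continuousWithinAt
  have hderiv : ∀ w ∈ Set.Ico x y,
      HasDerivWithinAt (fun w => (SS w - FF w)^2 * (1+w)^3 / w) 0 (Set.Ici w) w := by
    intro w hw
    exact (hasDerivAt_EE (lt_of_lt_of_le hx hw.1) (lt_of_lt_of_le hw.2 hy.le)).hasDerivWithinAt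
  exact constant_of_has_deriv_right_zero hcont hderiv y (Set.right_mem_Icc.mpr hxy)

lemma FF_zero : FF 0 = 1 := by simp [FF, GG_zero]

lemma SS_eq_FF {z : ℝ} (hz0 : 0 ≤ z) (hz1 : z < 1) : SS z = FF z := by
  rcases eq_or_lt_of_le hz0 with h | hz0'
  · rw [← h, SS_zero, FF_zero]
  have hd0 : HasDerivAt (fun w => SS w - FF w) (DS 0 - DF 0) 0 :=
    (hasDerivAt_SS' (by norm_num)).sub (hasDerivAt_FF le_rfl one_pos)
  have hD0 : SS 0 - FF 0 = 0 := by rw [SS_zero, FF_zero]; ring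
  have hslope : Filter.Tendsto (fun w => (SS w - FF w) / w) (nhdsWithin 0 {(0:ℝ)}ᶜ)
      (nhds (DS 0 - DF 0)) := by
    have h := hasDerivAt_iff_tendsto_slope.mp hd0
    apply h.congr
    intro w
    simp [slope_def_field, SS_zero, FF_zero]
  have hslope' : Filter.Tendsto (fun w => (SS w - FF w) / w) (nhdsWithin 0 (Set.Ioi 0))
      (nhds (DS 0 - DF 0)) :=
    hslope.mono_left (nhdsWithin_mono 0 (fun w hw => ne_of_gt hw))
  have hcube : Filter.Tendsto (fun w : ℝ => w * (1+w)^3) (nhdsWithin 0 (Set.Ioi 0))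
      (nhds 0) := by
    have hc : Continuous (fun w : ℝ => w * (1+w)^3) := by continuity
    have := hc.tendsto 0
    simp only [zero_mul] at this
    exact tendsto_nhdsWithin_of_tendsto_nhds this
  have htendE : Filter.Tendsto (fun w => (SS w - FF w)^2 * (1+w)^3 / w)
      (nhdsWithin 0 (Set.Ioi 0)) (nhds 0) := by
    have hmul := ((hslope'.pow 2).mul hcube)
    simp only [mul_zero] at hmul
    apply hmul.congr'
    filter_upwards [self_mem_nhdsWithin] with w hw
    have hw0 : w ≠ 0 := ne_of_gt hw
    field_simp
  have hconstE : Filter.Tendsto (fun w => (SS w - FF w)^2 * (1+w)^3 / w)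
      (nhdsWithin 0 (Set.Ioi 0)) (nhds ((SS z - FF z)^2 * (1+z)^3 / z)) := by
    apply Filter.Tendsto.congr' _ tendsto_const_nhds
    filter_upwards [Ioc_mem_nhdsGT hz0'] with w hw
    exact EE_eq hw.1 hw.2 hz1
  have hEz : (SS z - FF z)^2 * (1+z)^3 / z = 0 :=
    tendsto_nhds_unique hconstE htendE
  have h1z : (0:ℝ) < 1 + z := by linarith
  have hnum : (SS z - FF z)^2 * (1+z)^3 = 0 := by
    rcases div_eq_zero_iff.mp hEz with h | h
    · exact h
    · exact absurd h hz0'.ne'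
  have hD : SS z - FF z = 0 := by
    rcases mul_eq_zero.mp hnum with h | h
    · exact pow_eq_zero_iff (two_ne_zero) |>.mp h
    · exact absurd h (pow_ne_zero 3 h1z.ne')
  linarith [hD]

theorem stmt8 (z t : ℝ) (hz0 : 0 ≤ z) (hz1 : z < 1) (ht : t = z / (1 + z)) :
    HasSum (fun n : ℕ => ((Nat.centralBinom n : ℝ))⁻¹ * (-1) ^ n * 4 ^ n * z ^ n)
      ((1 / (1 + z)) *
        (1 + (1 / 2) * Real.sqrt t * Real.log ((1 - Real.sqrt t) / (1 + Real.sqrt t)))) := by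
  subst ht
  have h1z : (0:ℝ) < 1 + z := by linarith
  obtain ⟨hu0, hu1⟩ := t_mem hz0 hz1
  set u := z / (1 + z) with hu
  have hzabs : |z| < 1 := by rw [abs_of_nonneg hz0]; exact hz1
  have hsum : HasSum (fun n : ℕ => cc n * z ^ n) (SS z) := (summable_SS hzabs).hasSum
  have hfun : (fun n : ℕ => ((Nat.centralBinom n : ℝ))⁻¹ * (-1) ^ n * 4 ^ n * z ^ n)
      = fun n : ℕ => cc n * z ^ n := by
    funext n
    rw [cc]
    have hneg : ((-4:ℝ)) ^ n = (-1) ^ n * 4 ^ n := by rw [← neg_one_mul, mul_pow]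
    rw [hneg, div_eq_mul_inv]
    ring
  set s := Real.sqrt u with hs
  have hs0 : 0 ≤ s := Real.sqrt_nonneg u
  have hs1 : s < 1 := by
    have := Real.sqrt_lt_sqrt hu0 hu1
    rwa [Real.sqrt_one] at this
  have hsabs : |s| < 1 := by rw [abs_of_nonneg hs0]; exact hs1
  have hsq : s ^ 2 = u := Real.sq_sqrt hu0
  have hlog := Real.hasSum_log_sub_log_of_abs_lt_one hsabs
  have hmul := hlog.mul_left (-(s/2))
  have hfun2 : (fun k : ℕ => -(s/2) * ((2:ℝ) * (1 / (2 * k + 1)) * s ^ (2 * k + 1)))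
      = fun k : ℕ => -(u ^ (k+1) / (2 * (k:ℝ) + 1)) := by
    funext k
    have hk := (twok1_pos k).ne'
    have hpow : s ^ (2 * (k+1)) = u ^ (k+1) := by rw [pow_mul, hsq]
    have h1 : s * s ^ (2 * k + 1) = u ^ (k+1) := by
      rw [← hpow]; ring
    calc -(s/2) * ((2:ℝ) * (1 / (2 * k + 1)) * s ^ (2 * k + 1))
        = -((s * s ^ (2*k+1)) / (2 * (k:ℝ) + 1)) := by ring
      _ = -(u ^ (k+1) / (2 * (k:ℝ) + 1)) := by rw [h1]
  rw [hfun2] at hmul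
  have hGG : HasSum (fun k : ℕ => u ^ (k+1) / (2 * (k:ℝ) + 1)) (GG u) :=
    (summable_GG (by rw [abs_of_nonneg hu0]; exact hu1)).hasSum
  have hval : -(s/2) * (Real.log (1 + s) - Real.log (1 - s)) = - GG u :=
    hmul.unique hGG.neg
  have hlogdiv : Real.log ((1 - s) / (1 + s)) = Real.log (1 - s) - Real.log (1 + s) :=
    Real.log_div (by linarith) (by linarith)
  have hrhs : (1 / (1 + z)) * (1 + (1 / 2) * s * Real.log ((1 - s) / (1 + s))) = SS z := by
    rw [SS_eq_FF hz0 hz1, FF, hlogdiv]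
    have : (1 / 2) * s * (Real.log (1 - s) - Real.log (1 + s)) = - GG u := by
      rw [← hval]; ring
    rw [this]
    field_simp
    rw [← hu]
    ring
  rw [hfun, hrhs]
  exact hsum
end

section
/- For every real z with 0 ≤ z < 1, the series ∑_{n=0}^∞ (binom(2n,n))⁻¹ · 4^n · z^n converges and equals (1/(1−z)) · ( 1 + √(z/(1−z)) · arctan(√(z/(1−z))) ). -/
open Real intervalIntegral

lemma beta_nat (m : ℕ) : ∀ n : ℕ, ∫ x in (0:ℝ)..1, x ^ n * (1 - x) ^ m
    = (Nat.factorial n * Nat.factorial m : ℝ) / Nat.factorial (n + m + 1) := by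
  induction m with
  | zero =>
    intro n
    simp [integral_pow, Nat.factorial_succ]
    rw [eq_div_iff (by positivity)]
    field_simp
  | succ m IH =>
    intro n
    have hu : ∀ x ∈ Set.uIcc (0:ℝ) 1, HasDerivAt (fun x : ℝ => (1 - x) ^ (m+1))
        (-((m+1 : ℝ) * (1 - x) ^ m)) x := by
      intro x _
      have h1 : HasDerivAt (fun x : ℝ => 1 - x) (-1) x := by
        simpa using (hasDerivAt_id x).const_sub 1
      have := h1.pow (m+1)
      exact this.congr_deriv (by rw [Nat.add_sub_cancel]; push_cast; ring)
    have hv : ∀ x ∈ Set.uIcc (0:ℝ) 1, HasDerivAt (fun x : ℝ => x ^ (n+1) / (n+1))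
        (x ^ n) x := by
      intro x _
      have := (hasDerivAt_pow (n+1) x).div_const ((n:ℝ)+1)
      have h2 : ((n:ℝ)+1) * x ^ n / ((n:ℝ)+1) = x ^ n := by
        field_simp
      simpa [h2] using this
    have hint1 : IntervalIntegrable (fun x : ℝ => -((m+1 : ℝ) * (1 - x) ^ m))
        MeasureTheory.volume 0 1 := (by continuity : Continuous _).intervalIntegrable _ _
    have hint2 : IntervalIntegrable (fun x : ℝ => x ^ n)
        MeasureTheory.volume 0 1 := (by continuity : Continuous _).intervalIntegrable _ _
    have IBP := intervalIntegral.integral_mul_deriv_eq_deriv_mul hu hv hint1 hint2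
    have hcomm : ∫ x in (0:ℝ)..1, x ^ n * (1 - x) ^ (m+1)
        = ∫ x in (0:ℝ)..1, (1 - x) ^ (m+1) * x ^ n := by
      congr 1; ext x; ring
    rw [hcomm, IBP]
    have : (∫ x in (0:ℝ)..1, -((m+1 : ℝ) * (1 - x) ^ m) * (x ^ (n+1) / (n+1)))
        = (-((m+1:ℝ)/(n+1))) * ∫ x in (0:ℝ)..1, x ^ (n+1) * (1 - x) ^ m := by
      rw [← intervalIntegral.integral_const_mul]
      congr 1; ext x; ring
    rw [this, IH (n+1)]
    have hidx : n + 1 + m + 1 = n + (m + 1) + 1 := by omega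
    rw [hidx]
    have h3 : (0:ℝ) < Nat.factorial (n + (m+1) + 1) := by positivity
    have h4 : (0:ℝ) < (n:ℝ) + 1 := by positivity
    simp only [Nat.factorial_succ]
    push_cast
    field_simp
    ring

lemma hs_pt {u : ℝ} (h0 : 0 ≤ u) (h1 : u < 1) :
    HasSum (fun n : ℕ => (2 * n + 1 : ℝ) * u ^ n) ((1 + u) / (1 - u) ^ 2) := by
  have hn : ‖u‖ < 1 := by rwa [Real.norm_eq_abs, abs_of_nonneg h0]
  have A := hasSum_coe_mul_geometric_of_norm_lt_one hn
  have B := hasSum_geometric_of_norm_lt_one hn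
  have C := (A.mul_left 2).add B
  have hu1 : (1 : ℝ) - u ≠ 0 := by linarith
  have e : (fun n : ℕ => (2 * n + 1 : ℝ) * u ^ n) = fun b : ℕ => 2 * ((b : ℝ) * u ^ b) + u ^ b := by
    funext n; ring
  have e2 : (1 + u) / (1 - u) ^ 2 = 2 * (u / (1 - u) ^ 2) + (1 - u)⁻¹ := by
    field_simp
    ring
  rw [e, e2]
  exact C

lemma denom_pos {z : ℝ} (hz0 : 0 ≤ z) (hz1 : z < 1) (t : ℝ) :
    0 < 1 - 4 * z * (t * (1 - t)) := by
  have h : 1 - 4 * z * (t * (1 - t)) = (1 - z) + z * (2 * t - 1) ^ 2 := by ring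
  rw [h]
  have : 0 ≤ z * (2 * t - 1) ^ 2 := by positivity
  linarith

lemma deriv_part {z : ℝ} (hz0 : 0 ≤ z) (hz1 : z < 1) (t : ℝ) :
    HasDerivAt (fun t : ℝ => (2 * t - 1) / (2 * (1 - z) * (1 - 4 * z * (t * (1 - t))))
        + Real.sqrt (z / (1 - z)) / (2 * (1 - z))
          * Real.arctan (Real.sqrt (z / (1 - z)) * (2 * t - 1)))
      ((1 + 4 * z * (t * (1 - t))) / (1 - 4 * z * (t * (1 - t))) ^ 2) t := by
  have ha : (0:ℝ) < 1 - z := by linarith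
  set w := Real.sqrt (z / (1 - z)) with hw
  have hw2 : w ^ 2 = z / (1 - z) := Real.sq_sqrt (by positivity)
  have hP : 0 < 1 - 4 * z * (t * (1 - t)) := denom_pos hz0 hz1 t
  have hnum : HasDerivAt (fun t : ℝ => 2 * t - 1) 2 t := by
    simpa using ((hasDerivAt_id t).const_mul 2).sub_const 1
  have hin : HasDerivAt (fun t : ℝ => t * (1 - t)) (1 - 2 * t) t := by
    have := (hasDerivAt_id t).mul ((hasDerivAt_id t).const_sub 1)
    exact this.congr_deriv (by simp; ring)
  have hden : HasDerivAt (fun t : ℝ => 2 * (1 - z) * (1 - 4 * z * (t * (1 - t))))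
      (2 * (1 - z) * (-(4 * z * (1 - 2 * t)))) t := by
    have h1 : HasDerivAt (fun t : ℝ => 1 - 4 * z * (t * (1 - t)))
        (-(4 * z * (1 - 2 * t))) t := by
      simpa using ((hin.const_mul (4 * z)).const_sub 1).congr_deriv (by ring)
    simpa using (h1.const_mul (2 * (1 - z))).congr_deriv (by ring)
  have hDne : 2 * (1 - z) * (1 - 4 * z * (t * (1 - t))) ≠ 0 := by positivity
  have hfrac := hnum.div hden hDne
  have hlin : HasDerivAt (fun t : ℝ => w * (2 * t - 1)) (w * 2) t := by
    simpa using (hnum.const_mul w).congr_deriv (by ring)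
  have harct := (hlin.arctan).const_mul (w / (2 * (1 - z)))
  have htot := hfrac.add harct
  refine htot.congr_deriv (Eq.symm ?_)
  have e1 : 1 + (w * (2 * t - 1)) ^ 2
      = (1 - 4 * z * (t * (1 - t))) / (1 - z) := by
    have h2 : (w * (2 * t - 1)) ^ 2 = w ^ 2 * (2 * t - 1) ^ 2 := by ring
    rw [h2, hw2]
    field_simp
    ring
  rw [e1]
  have e2 : w / (2 * (1 - z)) * (1 / ((1 - 4 * z * (t * (1 - t))) / (1 - z)) * (w * 2))
      = z / ((1 - z) * (1 - 4 * z * (t * (1 - t)))) := by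
    have hww : w * w = z / (1 - z) := by rw [← sq]; exact hw2
    have hPne : (1 - 4 * z * (t * (1 - t))) ≠ 0 := ne_of_gt hP
    have hane : (1 - z) ≠ 0 := ne_of_gt ha
    rw [one_div_div]
    rw [show w / (2 * (1 - z)) * ((1 - z) / (1 - 4 * z * (t * (1 - t))) * (w * 2))
        = (w * w) * ((1 - z) / (1 - 4 * z * (t * (1 - t)))) / (2 * (1 - z)) * 2 from by ring]
    rw [hww]
    field_simp
  rw [e2]
  field_simp
  ring

theorem stmt9 (z : ℝ) (hz0 : 0 ≤ z) (hz1 : z < 1) :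
    HasSum (fun n : ℕ => ((Nat.centralBinom n : ℝ))⁻¹ * 4 ^ n * z ^ n)
      ((1 / (1 - z)) *
        (1 + Real.sqrt (z / (1 - z)) * Real.arctan (Real.sqrt (z / (1 - z))))) := by
  have ha : (0:ℝ) < 1 - z := by linarith
  set w := Real.sqrt (z / (1 - z)) with hw
  set F : ℕ → ℝ → ℝ := fun n t => (2 * n + 1 : ℝ) * (4 * z * (t * (1 - t))) ^ n with hF
  set f : ℝ → ℝ := fun t =>
      (1 + 4 * z * (t * (1 - t))) / (1 - 4 * z * (t * (1 - t))) ^ 2 with hf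
  -- each term is the integral of F n
  have key1 : ∀ n : ℕ, (∫ t in (0:ℝ)..1, F n t)
      = ((Nat.centralBinom n : ℝ))⁻¹ * 4 ^ n * z ^ n := by
    intro n
    have e : ∀ t : ℝ, F n t = ((2 * n + 1 : ℝ) * (4 * z) ^ n) * (t ^ n * (1 - t) ^ n) := by
      intro t
      simp only [hF]
      rw [show 4 * z * (t * (1 - t)) = 4 * z * t * (1 - t) from by ring, mul_pow, mul_pow]
      ring
    rw [intervalIntegral.integral_congr (fun t _ => e t),
      intervalIntegral.integral_const_mul, beta_nat n n]
    have h1 : (Nat.factorial (n + n + 1) : ℝ)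
        = (2 * n + 1) * Nat.factorial (2 * n) := by
      rw [show n + n + 1 = (2 * n) + 1 from by omega, Nat.factorial_succ]
      push_cast; ring
    have h2 : ((2 * n).factorial : ℝ)
        = (Nat.centralBinom n : ℝ) * (Nat.factorial n * Nat.factorial n) := by
      have h2' := Nat.choose_mul_factorial_mul_factorial (show n ≤ 2 * n by omega)
      rw [show 2 * n - n = n from by omega] at h2'
      rw [Nat.centralBinom, ← h2']
      push_cast
      ring
    have hCpos : (0:ℝ) < (Nat.centralBinom n : ℝ) := by
      exact_mod_cast Nat.centralBinom_pos n
    have hfac : (0:ℝ) < (Nat.factorial n : ℝ) := by positivity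
    rw [h1, h2]
    have h2n1 : (0:ℝ) < 2 * (n:ℝ) + 1 := by positivity
    field_simp
    ring
  -- swap sum and integral
  have hsum_bound : Summable (fun n : ℕ => (2 * n + 1 : ℝ) * z ^ n) := by
    have hz : ‖z‖ < 1 := by rwa [Real.norm_eq_abs, abs_of_nonneg hz0]
    have h1 : Summable (fun n : ℕ => (n : ℝ) ^ 1 * z ^ n) :=
      summable_pow_mul_geometric_of_norm_lt_one 1 hz
    have h2 := (h1.mul_left 2).add (summable_geometric_of_norm_lt_one hz)
    exact h2.congr (fun n => by push_cast; ring)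
  have hS : HasSum (fun n : ℕ => ∫ t in (0:ℝ)..1, F n t) (∫ t in (0:ℝ)..1, f t) := by
    refine intervalIntegral.hasSum_integral_of_dominated_convergence
      (fun n _ => (2 * n + 1 : ℝ) * z ^ n) (fun n => ?_) (fun n => ?_) ?_ ?_ ?_
    · exact (Continuous.aestronglyMeasurable (by continuity)).restrict
    · filter_upwards with t ht
      rw [Set.uIoc_of_le (by norm_num : (0:ℝ) ≤ 1)] at ht
      have h4 : 0 ≤ 4 * z * (t * (1 - t)) := by
        have : 0 ≤ t * (1 - t) := mul_nonneg ht.1.le (by linarith [ht.2])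
        positivity
      have h5 : 4 * z * (t * (1 - t)) ≤ z := by nlinarith [sq_nonneg (2 * t - 1)]
      have hFnn : 0 ≤ F n t := by
        simp only [hF]; positivity
      rw [Real.norm_eq_abs, abs_of_nonneg hFnn]
      simp only [hF]
      have := pow_le_pow_left₀ h4 h5 n
      have hc : (0:ℝ) ≤ 2 * n + 1 := by positivity
      exact mul_le_mul_of_nonneg_left this hc
    · filter_upwards with t _
      exact hsum_bound
    · exact intervalIntegrable_const
    · filter_upwards with t ht
      rw [Set.uIoc_of_le (by norm_num : (0:ℝ) ≤ 1)] at ht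
      have h4 : 0 ≤ 4 * z * (t * (1 - t)) := by
        have : 0 ≤ t * (1 - t) := mul_nonneg ht.1.le (by linarith [ht.2])
        positivity
      have h5 : 4 * z * (t * (1 - t)) ≤ z := by nlinarith [sq_nonneg (2 * t - 1)]
      exact hs_pt h4 (lt_of_le_of_lt h5 hz1)
  -- compute the integral of f using FTC
  have hfcont : Continuous f := by
    apply Continuous.div (by continuity) (by continuity)
    intro t
    exact pow_ne_zero 2 (ne_of_gt (denom_pos hz0 hz1 t))
  have hFTC : (∫ t in (0:ℝ)..1, f t)
      = (1 / (1 - z)) * (1 + w * Real.arctan w) := by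
    have := intervalIntegral.integral_eq_sub_of_hasDerivAt
      (f := fun t : ℝ => (2 * t - 1) / (2 * (1 - z) * (1 - 4 * z * (t * (1 - t))))
        + w / (2 * (1 - z)) * Real.arctan (w * (2 * t - 1)))
      (fun t _ => deriv_part hz0 hz1 t)
      (hfcont.intervalIntegrable 0 1)
    rw [this]
    have hane : (1 - z) ≠ 0 := ne_of_gt ha
    norm_num
    field_simp
    ring
  have hfun : (fun n : ℕ => ∫ t in (0:ℝ)..1, F n t)
      = fun n : ℕ => ((Nat.centralBinom n : ℝ))⁻¹ * 4 ^ n * z ^ n := funext key1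
  rw [hfun, hFTC] at hS
  exact hS
end
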